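/- arXiv:2401.16153 — 9 statements merged into one kernel-verified Lean document; each statement's English description precedes it below -/
import Mathlib

section
/- For fixed ξ > 0 and p > 3, the function u(t) = (|t+ξ|^{p-1}·sign(t+ξ) + |t-ξ|^{p-1}·sign(t-ξ))/t is monotone increasing on (0, ∞). -/
open Real Set Filter

/-- derivative of `s ↦ |s|^q * s` is `(q+1)|s|^q`. -/
lemma phi_hasDerivAt {q : ℝ} (hq : 1 < q) (s : ℝ) :
    HasDerivAt (fun s : ℝ => |s| ^ q * s) ((q + 1) * |s| ^ q) s := by
  rcases lt_trichotomy s 0 with hs | hs | hs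
  · have hne : (-s) ≠ 0 := by simp [ne_of_lt hs]
    have d1 : HasDerivAt (fun x : ℝ => (-x) ^ q) (q * (-s) ^ (q - 1) * (-1)) s :=
      (Real.hasDerivAt_rpow_const (p := q) (Or.inl hne)).comp s (hasDerivAt_neg s)
    have d2 : HasDerivAt (fun x : ℝ => (-x) ^ q * x)
        (q * (-s) ^ (q - 1) * (-1) * s + (-s) ^ q * 1) s := d1.mul (hasDerivAt_id s)
    have keyv : q * (-s) ^ (q - 1) * (-1) * s + (-s) ^ q * 1 = (q + 1) * |s| ^ q := by
      have h1 : (-s) ^ q = (-s) ^ (q - 1) * (-s) := by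
        rw [← Real.rpow_add_one hne]; ring_nf
      rw [abs_of_neg hs, h1]; ring
    have heq : (fun x : ℝ => |x| ^ q * x) =ᶠ[nhds s] fun x : ℝ => (-x) ^ q * x := by
      filter_upwards [Iio_mem_nhds hs] with x hx
      rw [abs_of_neg hx]
    exact (keyv ▸ d2).congr_of_eventuallyEq heq
  · subst hs
    rw [hasDerivAt_iff_tendsto_slope]
    have h0 : |(0:ℝ)| ^ q = 0 := by
      rw [abs_zero, Real.zero_rpow (by linarith)]
    have hcont : Tendsto (fun x : ℝ => |x| ^ q) (nhds 0) (nhds ((q + 1) * |(0:ℝ)| ^ q)) := by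
      rw [h0, mul_zero]
      have : ContinuousAt (fun x : ℝ => |x| ^ q) 0 :=
        (Real.continuousAt_rpow_const _ q (Or.inr (by linarith))).comp continuous_abs.continuousAt
      have := this.tendsto
      rw [show |(0:ℝ)| ^ q = 0 from h0] at this
      exact this
    refine (hcont.mono_left nhdsWithin_le_nhds).congr' ?_
    filter_upwards [self_mem_nhdsWithin] with x hx
    have hx' : x ≠ 0 := hx
    rw [slope_def_field]
    field_simp
    simp
  · have hne : s ≠ 0 := ne_of_gt hs
    have d1 : HasDerivAt (fun x : ℝ => x ^ q * x)
        (q * s ^ (q - 1) * s + s ^ q * 1) s :=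
      (Real.hasDerivAt_rpow_const (p := q) (Or.inl hne)).mul (hasDerivAt_id s)
    have keyv : q * s ^ (q - 1) * s + s ^ q * 1 = (q + 1) * |s| ^ q := by
      have h1 : s ^ q = s ^ (q - 1) * s := by
        rw [← Real.rpow_add_one hne]; ring_nf
      rw [abs_of_pos hs, h1]; ring
    have heq : (fun x : ℝ => |x| ^ q * x) =ᶠ[nhds s] fun x : ℝ => x ^ q * x := by
      filter_upwards [Ioi_mem_nhds hs] with x hx
      rw [abs_of_pos hx]
    exact (keyv ▸ d1).congr_of_eventuallyEq heq

lemma keyF {ξ q : ℝ} (hξ : 0 < ξ) (hq : 1 < q) {t : ℝ} (ht0 : 0 ≤ t) (ht : t ≤ ξ) :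
    (ξ + t) ^ q * (ξ - q * t) ≤ (ξ - t) ^ q * (ξ + q * t) := by
  have hq0 : (0:ℝ) ≤ q := by linarith
  set F : ℝ → ℝ := fun t => (ξ - t) ^ q * (ξ + q * t) - (ξ + t) ^ q * (ξ - q * t) with hF
  have hcont : Continuous F := by
    apply Continuous.sub
    · exact ((Real.continuous_rpow_const hq0).comp
        (continuous_const.sub continuous_id)).mul
        (continuous_const.add (continuous_const.mul continuous_id))
    · exact ((Real.continuous_rpow_const hq0).comp
        (continuous_const.add continuous_id)).mul
        (continuous_const.sub (continuous_const.mul continuous_id))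
  have hmono : MonotoneOn F (Icc 0 ξ) := by
    apply monotoneOn_of_hasDerivWithinAt_nonneg (convex_Icc 0 ξ) hcont.continuousOn
      (f' := fun x => q * (q + 1) * x * ((ξ + x) ^ (q - 1) - (ξ - x) ^ (q - 1)))
    · intro x hx
      rw [interior_Icc] at hx
      obtain ⟨hx0, hxξ⟩ := hx
      have h1 : HasDerivAt (fun t : ℝ => ξ - t) (-1) x := (hasDerivAt_id x).const_sub ξ
      have h2 : HasDerivAt (fun t : ℝ => ξ + q * t) (q * 1) x :=
        ((hasDerivAt_id x).const_mul q).const_add ξ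
      have h3 : HasDerivAt (fun t : ℝ => ξ + t) (1) x := by
        simpa using ((hasDerivAt_id x).const_add ξ)
      have h4 : HasDerivAt (fun t : ℝ => ξ - q * t) (-(q * 1)) x :=
        ((hasDerivAt_id x).const_mul q).const_sub ξ
      have d1 : HasDerivAt (fun t : ℝ => (ξ - t) ^ q) (q * (ξ - x) ^ (q - 1) * (-1)) x :=
        (Real.hasDerivAt_rpow_const (p := q) (Or.inr hq.le)).comp x h1
      have d2 : HasDerivAt (fun t : ℝ => (ξ + t) ^ q) (q * (ξ + x) ^ (q - 1) * 1) x :=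
        (Real.hasDerivAt_rpow_const (p := q) (Or.inr hq.le)).comp x h3
      have dF : HasDerivAt F
          ((q * (ξ - x) ^ (q - 1) * (-1)) * (ξ + q * x) + (ξ - x) ^ q * (q * 1)
            - ((q * (ξ + x) ^ (q - 1) * 1) * (ξ - q * x) + (ξ + x) ^ q * (-(q * 1)))) x :=
        (d1.mul h2).sub (d2.mul h4)
      have e1 : (ξ - x) ^ q = (ξ - x) ^ (q - 1) * (ξ - x) := by
        rw [← Real.rpow_add_one (by intro h; nlinarith [sub_eq_zero.mp h] : ξ - x ≠ 0)]
        ring_nf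
      have e2 : (ξ + x) ^ q = (ξ + x) ^ (q - 1) * (ξ + x) := by
        rw [← Real.rpow_add_one (by positivity : ξ + x ≠ 0)]
        ring_nf
      have hval : (q * (ξ - x) ^ (q - 1) * (-1)) * (ξ + q * x) + (ξ - x) ^ q * (q * 1)
            - ((q * (ξ + x) ^ (q - 1) * 1) * (ξ - q * x) + (ξ + x) ^ q * (-(q * 1)))
          = q * (q + 1) * x * ((ξ + x) ^ (q - 1) - (ξ - x) ^ (q - 1)) := by
        rw [e1, e2]; ring
      exact (hval ▸ dF).hasDerivWithinAt
    · intro x hx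
      rw [interior_Icc] at hx
      obtain ⟨hx0, hxξ⟩ := hx
      have hle : (ξ - x) ^ (q - 1) ≤ (ξ + x) ^ (q - 1) :=
        Real.rpow_le_rpow (by linarith) (by linarith) (by linarith)
      have : 0 ≤ (ξ + x) ^ (q - 1) - (ξ - x) ^ (q - 1) := by linarith
      positivity
  have h0m : (0:ℝ) ∈ Icc 0 ξ := ⟨le_refl 0, hξ.le⟩
  have htm : t ∈ Icc 0 ξ := ⟨ht0, ht⟩
  have := hmono h0m htm ht0
  have hF0 : F 0 = 0 := by simp [hF]
  rw [hF0] at this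
  simp only [hF] at this
  linarith

lemma numer_nonneg {ξ q : ℝ} (hξ : 0 < ξ) (hq : 1 < q) {t : ℝ} (ht : 0 < t) :
    0 ≤ (q * t - ξ) * (t + ξ) ^ q + (q * t + ξ) * |t - ξ| ^ q := by
  have hA : (0:ℝ) ≤ (t + ξ) ^ q := Real.rpow_nonneg (by linarith) q
  have hB : (0:ℝ) ≤ |t - ξ| ^ q := Real.rpow_nonneg (abs_nonneg _) q
  rcases le_or_gt ξ (q * t) with h | h
  · have h2 : 0 ≤ (q * t - ξ) * (t + ξ) ^ q := mul_nonneg (by linarith) hA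
    have h3 : 0 ≤ (q * t + ξ) * |t - ξ| ^ q := mul_nonneg (by linarith) hB
    linarith
  · have htξ : t < ξ := by nlinarith
    have habs : |t - ξ| = ξ - t := by rw [abs_of_neg (by linarith)]; ring
    have := keyF hξ hq ht.le htξ.le
    rw [habs]
    have hc : (t + ξ) ^ q = (ξ + t) ^ q := by ring_nf
    rw [hc]
    nlinarith [this]

/-- For fixed `ξ > 0` and `p > 3`, the function
`u(t) = (|t+ξ|^(p-1) sign(t+ξ) + |t-ξ|^(p-1) sign(t-ξ)) / t`
is monotone increasing on `(0, ∞)`. -/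
theorem stmt_0 (ξ p : ℝ) (hξ : 0 < ξ) (hp : 3 < p) :
    MonotoneOn
      (fun t : ℝ =>
        (|t + ξ| ^ (p - 1) * Real.sign (t + ξ) +
          |t - ξ| ^ (p - 1) * Real.sign (t - ξ)) / t)
      (Set.Ioi (0 : ℝ)) := by
  set q : ℝ := p - 2 with hqdef
  have hq : 1 < q := by simp [hqdef]; linarith
  -- rewrite the function
  have hsign : ∀ s : ℝ, |s| ^ (p - 1) * Real.sign s = |s| ^ q * s := by
    intro s
    rcases lt_trichotomy s 0 with hs | hs | hs
    · rw [Real.sign_of_neg hs, abs_of_neg hs]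
      have : (-s) ^ (p - 1) = (-s) ^ q * (-s) := by
        rw [← Real.rpow_add_one (by simp [ne_of_lt hs] : (-s) ≠ 0)]
        norm_num [hqdef]
        ring_nf
      rw [this]; ring
    · subst hs; simp
    · rw [Real.sign_of_pos hs, abs_of_pos hs]
      have : s ^ (p - 1) = s ^ q * s := by
        rw [← Real.rpow_add_one (ne_of_gt hs)]
        norm_num [hqdef]
        ring_nf
      rw [this]; ring
  have hfun : (fun t : ℝ =>
        (|t + ξ| ^ (p - 1) * Real.sign (t + ξ) +
          |t - ξ| ^ (p - 1) * Real.sign (t - ξ)) / t)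
      = fun t : ℝ => (|t + ξ| ^ q * (t + ξ) + |t - ξ| ^ q * (t - ξ)) / t := by
    funext t; rw [hsign (t + ξ), hsign (t - ξ)]
  rw [hfun]
  -- derivative at each point of Ioi 0
  have hderiv : ∀ x : ℝ, 0 < x →
      HasDerivAt (fun t : ℝ => (|t + ξ| ^ q * (t + ξ) + |t - ξ| ^ q * (t - ξ)) / t)
        ((((q + 1) * |x + ξ| ^ q * 1 + (q + 1) * |x - ξ| ^ q * 1) * x
          - (|x + ξ| ^ q * (x + ξ) + |x - ξ| ^ q * (x - ξ)) * 1) / x ^ 2) x := by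
    intro x hx
    have i1 : HasDerivAt (fun t : ℝ => t + ξ) 1 x := (hasDerivAt_id x).add_const ξ
    have i2 : HasDerivAt (fun t : ℝ => t - ξ) 1 x := (hasDerivAt_id x).sub_const ξ
    have d1 : HasDerivAt (fun t : ℝ => |t + ξ| ^ q * (t + ξ)) ((q + 1) * |x + ξ| ^ q * 1) x :=
      by have := (phi_hasDerivAt hq (x + ξ)).comp x i1; exact this
    have d2 : HasDerivAt (fun t : ℝ => |t - ξ| ^ q * (t - ξ)) ((q + 1) * |x - ξ| ^ q * 1) x :=
      by have := (phi_hasDerivAt hq (x - ξ)).comp x i2; exact this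
    exact (d1.add d2).div (hasDerivAt_id x) (ne_of_gt hx)
  apply monotoneOn_of_hasDerivWithinAt_nonneg (convex_Ioi 0)
    (f' := fun x => (((q + 1) * |x + ξ| ^ q * 1 + (q + 1) * |x - ξ| ^ q * 1) * x
          - (|x + ξ| ^ q * (x + ξ) + |x - ξ| ^ q * (x - ξ)) * 1) / x ^ 2)
  · intro x hx
    exact ((hderiv x hx).continuousAt).continuousWithinAt
  · intro x hx
    rw [interior_Ioi] at hx
    exact ((hderiv x hx).hasDerivWithinAt)
  · intro x hx
    rw [interior_Ioi] at hx
    have hx : (0:ℝ) < x := hx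
    apply div_nonneg _ (by positivity)
    have habs : |x + ξ| = x + ξ := abs_of_pos (by linarith)
    have hnum := numer_nonneg hξ hq hx
    rw [habs]
    nlinarith [hnum]
end

section
/- For fixed ξ > 0 and p > 3, the numerator function N(t) = |t+ξ|^{p-2}((p-2)t - ξ) + |t-ξ|^{p-2}((p-2)t + ξ) is nonnegative for all t ≥ 0. -/
open Real Set

/-- For fixed `ξ > 0` and `p > 3`, the numerator
`N(t) = |t+ξ|^(p-2)((p-2)t - ξ) + |t-ξ|^(p-2)((p-2)t + ξ)` is nonnegative for `t ≥ 0`. -/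
theorem stmt_1 (ξ p : ℝ) (hξ : 0 < ξ) (hp : 3 < p) (t : ℝ) (ht : 0 ≤ t) :
    0 ≤ |t + ξ| ^ (p - 2) * ((p - 2) * t - ξ) +
        |t - ξ| ^ (p - 2) * ((p - 2) * t + ξ) := by
  by_cases hc : 0 ≤ (p - 2) * t - ξ
  · have h1 : (0:ℝ) ≤ |t + ξ| ^ (p - 2) := Real.rpow_nonneg (abs_nonneg _) _
    have h2 : (0:ℝ) ≤ |t - ξ| ^ (p - 2) := Real.rpow_nonneg (abs_nonneg _) _
    have h3 : 0 ≤ (p - 2) * t + ξ := by nlinarith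
    exact add_nonneg (mul_nonneg h1 hc) (mul_nonneg h2 h3)
  · push_neg at hc
    have htξ : t ≤ ξ := by nlinarith
    set g : ℝ → ℝ := fun s =>
      (s + ξ) ^ (p - 2) * ((p - 2) * s - ξ) + (ξ - s) ^ (p - 2) * ((p - 2) * s + ξ) with hg
    have hcont : ContinuousOn g (Icc 0 ξ) := by
      apply ContinuousOn.add
      · exact (((continuousOn_id.add continuousOn_const).rpow_const
          (fun x hx => Or.inr (by linarith))).mul
          ((continuousOn_const.mul continuousOn_id).sub continuousOn_const))
      · exact (((continuousOn_const.sub continuousOn_id).rpow_const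
          (fun x hx => Or.inr (by linarith))).mul
          ((continuousOn_const.mul continuousOn_id).add continuousOn_const))
    have hps : (0:ℝ) < p - 2 := by linarith
    have hderiv : ∀ x ∈ Ioo (0:ℝ) ξ, HasDerivAt g
        ((p - 2) * (x + ξ) ^ (p - 2 - 1) * ((p - 2) * x - ξ)
          + (x + ξ) ^ (p - 2) * (p - 2)
          + (-((p - 2) * (ξ - x) ^ (p - 2 - 1)) * ((p - 2) * x + ξ)
          + (ξ - x) ^ (p - 2) * (p - 2))) x := by
      intro x hx
      have hx0 : (0:ℝ) ≤ x := hx.1.le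
      have hx1 : (0:ℝ) < x + ξ := by have := hx.1; linarith
      have hx2 : (0:ℝ) < ξ - x := by have := hx.2; linarith
      have hA : HasDerivAt (fun s : ℝ => (s + ξ) ^ (p - 2))
          ((p - 2) * (x + ξ) ^ (p - 2 - 1)) x := by
        simpa [mul_comm] using
          (((hasDerivAt_id x).add_const ξ).rpow_const (Or.inl hx1.ne'))
      have hB : HasDerivAt (fun s : ℝ => (ξ - s) ^ (p - 2))
          (-((p - 2) * (ξ - x) ^ (p - 2 - 1))) x := by
        simpa [mul_comm] using
          ((((hasDerivAt_id x).const_sub ξ)).rpow_const (Or.inl hx2.ne'))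
      have hL : HasDerivAt (fun s : ℝ => (p - 2) * s - ξ) (p - 2) x := by
        simpa using (((hasDerivAt_id x).const_mul (p - 2)).sub_const ξ)
      have hM : HasDerivAt (fun s : ℝ => (p - 2) * s + ξ) (p - 2) x := by
        simpa using (((hasDerivAt_id x).const_mul (p - 2)).add_const ξ)
      exact (hA.mul hL).add (hB.mul hM)
    have hmono : MonotoneOn g (Icc 0 ξ) := by
      apply monotoneOn_of_deriv_nonneg (convex_Icc 0 ξ) hcont
      · intro x hx
        rw [interior_Icc] at hx
        exact ((hderiv x hx).differentiableAt).differentiableWithinAt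
      · intro x hx
        rw [interior_Icc] at hx
        rw [(hderiv x hx).deriv]
        have hx0 : (0:ℝ) ≤ x := hx.1.le
        have hx1 : (0:ℝ) < x + ξ := by have := hx.1; linarith
        have hx2 : (0:ℝ) < ξ - x := by have := hx.2; linarith
        have hAB : (ξ - x) ^ (p - 3) ≤ (x + ξ) ^ (p - 3) :=
          Real.rpow_le_rpow hx2.le (by linarith) (by linarith)
        have e1 : (x + ξ) ^ (p - 2) = (x + ξ) ^ (p - 3) * (x + ξ) := by
          rw [show p - 2 = (p - 3) + 1 by ring, Real.rpow_add_one hx1.ne']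
        have e2 : (ξ - x) ^ (p - 2) = (ξ - x) ^ (p - 3) * (ξ - x) := by
          rw [show p - 2 = (p - 3) + 1 by ring, Real.rpow_add_one hx2.ne']
        have e3 : p - 2 - 1 = p - 3 := by ring
        rw [e1, e2, e3]
        have key : (p - 2) * (x + ξ) ^ (p - 3) * ((p - 2) * x - ξ)
            + (x + ξ) ^ (p - 3) * (x + ξ) * (p - 2)
            + (-((p - 2) * (ξ - x) ^ (p - 3)) * ((p - 2) * x + ξ)
            + (ξ - x) ^ (p - 3) * (ξ - x) * (p - 2))
            = (p - 2) * (p - 1) * x * ((x + ξ) ^ (p - 3) - (ξ - x) ^ (p - 3)) := by ring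
        rw [key]
        exact mul_nonneg (mul_nonneg (mul_nonneg (by linarith) (by linarith)) hx0)
          (sub_nonneg.2 hAB)
    have h0 : g 0 = 0 := by simp [hg]
    have hgt : g 0 ≤ g t := hmono (left_mem_Icc.2 hξ.le) ⟨ht, htξ⟩ ht
    have habs1 : |t + ξ| = t + ξ := abs_of_nonneg (by linarith)
    have habs2 : |t - ξ| = ξ - t := by
      rw [abs_of_nonpos (by linarith)]; ring
    rw [habs1, habs2]
    rw [h0] at hgt
    simpa [hg] using hgt
end

section
/- Let p > 3 and ξ ∈ ℝ be fixed, and r > 0. Then among all pairs (x, y) with x² + y² = r², the sum |x+y+ξ|^p + |x+y-ξ|^p + |y-x+ξ|^p + |y-x-ξ|^p attains its maximum exactly at points with |x| = |y| = r/√2. -/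
open Real Set Filter



lemma sq_rpow (x e : ℝ) : (x^2)^(e/2) = |x|^e := by
  rw [← sq_abs x, ← Real.rpow_natCast |x| 2, ← Real.rpow_mul (abs_nonneg x)]
  congr 1; push_cast; ring

lemma tendsto_abs_rpow_zero {e : ℝ} (he : 0 < e) :
    Tendsto (fun h : ℝ => |h| ^ e) (nhds 0) (nhds 0) := by
  have hc : ContinuousAt (fun z : ℝ => z ^ e) 0 :=
    Real.continuousAt_rpow_const 0 e (Or.inr he.le)
  have h2 : Tendsto (fun h : ℝ => |h|) (nhds 0) (nhds 0) := by
    simpa using continuous_abs.tendsto (0:ℝ)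
  have := hc.tendsto.comp h2
  simpa [Function.comp_def, Real.zero_rpow (ne_of_gt he)] using this

lemma hasDerivAt_sq_rpow {e : ℝ} (he : 1 < e) (x : ℝ) :
    HasDerivAt (fun x : ℝ => (x^2)^(e/2)) (e * x * (x^2)^((e-2)/2)) x := by
  rcases eq_or_ne x 0 with rfl | hx
  · rw [show e * 0 * ((0:ℝ)^2)^((e-2)/2) = 0 by ring]
    rw [hasDerivAt_iff_tendsto_slope]
    apply squeeze_zero_norm (a := fun h : ℝ => |h| ^ (e-1))
    · intro t
      rcases eq_or_ne t 0 with rfl | ht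
      · simp only [slope_same, norm_zero]
        exact Real.rpow_nonneg (abs_nonneg _) _
      · have h1 : slope (fun x : ℝ => (x^2)^(e/2)) 0 t = (t^2)^(e/2) / t := by
          rw [slope_def_field,
            show ((0:ℝ)^2)^(e/2) = 0 by simp [Real.zero_rpow (show e/2 ≠ 0 by positivity)]]
          ring
        rw [h1, sq_rpow, Real.norm_eq_abs, abs_div, abs_rpow_of_nonneg (abs_nonneg t), abs_abs,
          ← Real.rpow_sub_one (abs_ne_zero.mpr ht) e]
    · exact (tendsto_abs_rpow_zero (by linarith)).mono_left nhdsWithin_le_nhds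
  · have h1 : HasDerivAt (fun x : ℝ => x^2) (2*x) x := by
      simpa using hasDerivAt_pow 2 x
    have h2 := h1.rpow_const (p := e/2) (Or.inl (pow_ne_zero 2 hx))
    convert h2 using 1
    rw [show e/2 - 1 = (e-2)/2 by ring]
    ring

lemma hasDerivAt_mul_sq_rpow {e : ℝ} (he : 0 < e) (x : ℝ) :
    HasDerivAt (fun x : ℝ => x * (x^2)^(e/2)) ((e+1) * (x^2)^(e/2)) x := by
  rcases eq_or_ne x 0 with rfl | hx
  · rw [show ((0:ℝ)^2) = 0 by ring, Real.zero_rpow (show e/2 ≠ 0 by positivity), mul_zero]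
    rw [hasDerivAt_iff_tendsto_slope]
    apply squeeze_zero_norm (a := fun h : ℝ => |h| ^ e)
    · intro t
      rcases eq_or_ne t 0 with rfl | ht
      · simp only [slope_same, norm_zero]
        exact Real.rpow_nonneg (abs_nonneg _) _
      · have h1 : slope (fun x : ℝ => x * (x^2)^(e/2)) 0 t = (t^2)^(e/2) := by
          rw [slope_def_field]
          simp only [sub_zero, zero_mul]
          field_simp
        rw [h1, sq_rpow, Real.norm_eq_abs, abs_rpow_of_nonneg (abs_nonneg t), abs_abs]
    · exact (tendsto_abs_rpow_zero he).mono_left nhdsWithin_le_nhds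
  · have h1 : HasDerivAt (fun x : ℝ => x^2) (2*x) x := by
      simpa using hasDerivAt_pow 2 x
    have h2 := h1.rpow_const (p := e/2) (Or.inl (pow_ne_zero 2 hx))
    have h3 := (hasDerivAt_id x).mul h2
    refine h3.congr_deriv ?_
    simp only [id_eq]
    have hx2 : (0:ℝ) < x^2 := by positivity
    have : (x^2)^(e/2) = (x^2)^(e/2-1) * x^2 := by
      rw [← Real.rpow_add_one (ne_of_gt hx2)]; ring_nf
    rw [this]; ring


lemma rpow_tangent {q a b : ℝ} (hq : 1 < q) (ha : 0 < a) (hb : 0 ≤ b) (hab : b ≠ a) :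
    a^q - b^q < q * a^(q-1) * (a - b) := by
  have hs : -1 ≤ b/a - 1 := by
    have : 0 ≤ b/a := div_nonneg hb ha.le
    linarith
  have hs' : b/a - 1 ≠ 0 := by
    intro h
    apply hab
    have : b/a = 1 := by linarith
    field_simp at this
    linarith
  have hber := one_add_mul_self_lt_rpow_one_add hs hs' hq
  rw [show (1 + (b/a - 1)) = b/a by ring, Real.div_rpow hb ha.le] at hber
  have haq : (0:ℝ) < a^q := Real.rpow_pos_of_pos ha q
  have key : a^q * (1 + q*(b/a - 1)) < b^q := by
    calc a^q * (1 + q*(b/a-1)) < a^q * (b^q/a^q) := by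
          exact mul_lt_mul_of_pos_left hber haq
    _ = b^q := by field_simp
  have hAb : a^q * (b/a) = a^(q-1)*b := by
    rw [Real.rpow_sub_one (ne_of_gt ha)]
    field_simp
  have haq1 : a^q = a^(q-1) * a := by
    rw [Real.rpow_sub_one (ne_of_gt ha)]
    field_simp
  have key2 : a^q + q*(a^(q-1)*b) - q*(a^(q-1)*a) < b^q := by
    have e1 : a^q * (1 + q*(b/a - 1)) = a^q + q*(a^q*(b/a)) - q*a^q := by ring
    rw [e1, hAb] at key
    nlinarith [key, haq1]
  nlinarith [key2]

lemma key_aux {q : ℝ} (hq : 1 < q) {v : ℝ} (hv : 0 < v) {ξ : ℝ} (hξ : 0 ≤ ξ) :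
    ξ * (|v+ξ|^q - |v-ξ|^q) < q * v * (|v+ξ|^q + |v-ξ|^q) := by
  rcases eq_or_lt_of_le hξ with rfl | hξ0
  · simp only [add_zero, sub_zero, zero_mul]
    have h0 : 0 < |v|^q := Real.rpow_pos_of_pos (abs_pos.mpr hv.ne') q
    exact mul_pos (mul_pos (by linarith) hv) (add_pos h0 h0)
  rcases le_or_gt ξ v with hle | hlt
  · -- 0 < ξ ≤ v
    have ha : |v+ξ| = v+ξ := abs_of_pos (by linarith)
    have hb : |v-ξ| = v-ξ := abs_of_nonneg (by linarith)
    rw [ha, hb]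
    set a := v + ξ with hadef
    set b := v - ξ with hbdef
    have h1 : a^q - b^q < q * a^(q-1) * (a-b) := rpow_tangent hq (by positivity) (by simp [hbdef]; linarith) (by simp [hadef, hbdef]; intro h; nlinarith)
    have hq1pos : (0:ℝ) < a^(q-1) := Real.rpow_pos_of_pos (by positivity) _
    have haq1 : a^(q-1) * a = a^q := by
      rw [Real.rpow_sub_one (by positivity : a ≠ 0)]
      field_simp
      exact mul_div_cancel_right₀ _ (by positivity)
    have hbq : (0:ℝ) ≤ b^q := Real.rpow_nonneg (by simp [hbdef]; linarith) q
    have hab : a - b = 2*ξ := by simp [hadef, hbdef]; ring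
    rw [hab] at h1
    -- ξ*(a^q - b^q) < ξ*(q*a^(q-1)*2ξ) = 2qξ²a^(q-1) ≤ q v a^q
    have s1 : ξ * (a^q - b^q) < ξ * (q * a^(q-1) * (2*ξ)) := mul_lt_mul_of_pos_left h1 hξ0
    have s2 : 2*ξ^2 ≤ v * a := by nlinarith
    have s3 : ξ * (q * a^(q-1) * (2*ξ)) ≤ q * v * a^q := by
      have : ξ * (q * a^(q-1) * (2*ξ)) = q * (2*ξ^2) * a^(q-1) := by ring
      rw [this]
      calc q * (2*ξ^2) * a^(q-1) ≤ q * (v*a) * a^(q-1) := by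
            apply mul_le_mul_of_nonneg_right _ hq1pos.le
            apply mul_le_mul_of_nonneg_left s2 (by linarith)
      _ = q * v * (a^(q-1) * a) := by ring
      _ = q * v * a^q := by rw [haq1]
    have s4 : 0 ≤ q*v*b^q := mul_nonneg (mul_nonneg (by linarith) hv.le) hbq
    nlinarith [s1, s3, s4]
  · -- 0 < v < ξ
    have ha : |v+ξ| = ξ+v := by rw [abs_of_pos (by linarith)]; ring
    have hb : |v-ξ| = ξ-v := by rw [abs_of_neg (by linarith)]; ring
    rw [ha, hb]
    set f : ℝ → ℝ := fun s => q*s*((ξ+s)^q + (ξ-s)^q) - ξ*((ξ+s)^q - (ξ-s)^q) with hf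
    have cA : Continuous (fun s:ℝ => (ξ+s)^q) :=
      (continuous_const.add continuous_id).rpow_const (fun s => Or.inr (by linarith))
    have cB : Continuous (fun s:ℝ => (ξ-s)^q) :=
      (continuous_const.sub continuous_id).rpow_const (fun s => Or.inr (by linarith))
    have cf : Continuous f :=
      ((continuous_const.mul continuous_id).mul (cA.add cB)).sub (continuous_const.mul (cA.sub cB))
    have hder : ∀ s ∈ Ioo (0:ℝ) v, HasDerivAt f (q*(q+1)*s*((ξ+s)^(q-1) - (ξ-s)^(q-1))) s := by
      intro s hs
      have h1 : (0:ℝ) < ξ + s := by have := hs.1; linarith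
      have h2 : (0:ℝ) < ξ - s := by have := hs.2; linarith
      have hA : HasDerivAt (fun s:ℝ => (ξ+s)^q) (1 * q * (ξ+s)^(q-1)) s :=
        (((hasDerivAt_id s).const_add ξ)).rpow_const (Or.inl (ne_of_gt h1))
      have hB : HasDerivAt (fun s:ℝ => (ξ-s)^q) ((-1) * q * (ξ-s)^(q-1)) s :=
        (((hasDerivAt_id s).const_sub ξ)).rpow_const (Or.inl (ne_of_gt h2))
      have hD := (((hasDerivAt_id s).const_mul q).mul (hA.add hB)).sub ((hA.sub hB).const_mul ξ)
      refine hD.congr_deriv ?_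
      simp only [Pi.add_apply, Pi.sub_apply]
      have eA : (ξ+s)^q = (ξ+s)^(q-1)*(ξ+s) := by
        rw [← Real.rpow_add_one (ne_of_gt h1) (q-1)]
        norm_num
      have eB : (ξ-s)^q = (ξ-s)^(q-1)*(ξ-s) := by
        rw [← Real.rpow_add_one (ne_of_gt h2) (q-1)]
        norm_num
      rw [eA, eB]
      simp only [id_eq]
      ring
    have hmono : StrictMonoOn f (Icc 0 v) := by
      apply strictMonoOn_of_deriv_pos (convex_Icc 0 v) cf.continuousOn
      intro s hs
      rw [interior_Icc] at hs
      rw [(hder s hs).deriv]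
      have h1 : (ξ-s)^(q-1) < (ξ+s)^(q-1) :=
        Real.rpow_lt_rpow (by have := hs.2; linarith) (by have := hs.1; linarith) (by linarith)
      have := hs.1
      have h3 : (0:ℝ) < q*(q+1) := by nlinarith
      exact mul_pos (mul_pos h3 this) (sub_pos.mpr h1)
    have hf0 : f 0 = 0 := by simp [hf]
    have hfv : 0 < f v := by
      have := hmono (left_mem_Icc.mpr hv.le) (right_mem_Icc.mpr hv.le) hv
      rwa [hf0] at this
    simp only [hf] at hfv
    linarith

lemma key_ineq {q : ℝ} (hq : 1 < q) {v : ℝ} (hv : 0 < v) (ξ : ℝ) :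
    ξ * (|v+ξ|^q - |v-ξ|^q) < q * v * (|v+ξ|^q + |v-ξ|^q) := by
  rcases le_or_gt 0 ξ with hξ | hξ
  · exact key_aux hq hv hξ
  · have h := key_aux hq hv (ξ := -ξ) (by linarith)
    have e1 : |v + -ξ| = |v - ξ| := by rw [← sub_eq_add_neg]
    have e2 : |v - -ξ| = |v + ξ| := by rw [sub_neg_eq_add]
    rw [e1, e2] at h
    linarith


section
variable (p ξ : ℝ)

noncomputable def Gf (v : ℝ) : ℝ := ((v+ξ)^2)^(p/2) + ((v-ξ)^2)^(p/2)
noncomputable def Gd (v : ℝ) : ℝ :=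
  p*((v+ξ) * ((v+ξ)^2)^((p-2)/2)) + p*((v-ξ) * ((v-ξ)^2)^((p-2)/2))
noncomputable def Gdd (v : ℝ) : ℝ :=
  p*(p-1) * (((v+ξ)^2)^((p-2)/2) + ((v-ξ)^2)^((p-2)/2))
end

section
variable {p : ℝ} (ξ : ℝ) (hp : 3 < p)
include hp

lemma hasDerivAt_Gf (v : ℝ) : HasDerivAt (Gf p ξ) (Gd p ξ v) v := by
  have h1 : HasDerivAt (fun v : ℝ => ((v+ξ)^2)^(p/2))
      (p * (v+ξ) * ((v+ξ)^2)^((p-2)/2) * 1) v :=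
    by have := (hasDerivAt_sq_rpow (e := p) (by linarith) (v+ξ)).comp v ((hasDerivAt_id' v).add_const ξ); exact this
  have h2 : HasDerivAt (fun v : ℝ => ((v-ξ)^2)^(p/2))
      (p * (v-ξ) * ((v-ξ)^2)^((p-2)/2) * 1) v :=
    by have := (hasDerivAt_sq_rpow (e := p) (by linarith) (v-ξ)).comp v ((hasDerivAt_id' v).sub_const ξ); exact this
  have := h1.add h2
  unfold Gf Gd
  refine this.congr_deriv ?_
  ring

lemma hasDerivAt_Gd (v : ℝ) : HasDerivAt (Gd p ξ) (Gdd p ξ v) v := by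
  have h1 : HasDerivAt (fun v : ℝ => (v+ξ) * ((v+ξ)^2)^((p-2)/2))
      ((p-2+1) * ((v+ξ)^2)^((p-2)/2) * 1) v :=
    by have := (hasDerivAt_mul_sq_rpow (e := p-2) (by linarith) (v+ξ)).comp v ((hasDerivAt_id' v).add_const ξ); exact this
  have h2 : HasDerivAt (fun v : ℝ => (v-ξ) * ((v-ξ)^2)^((p-2)/2))
      ((p-2+1) * ((v-ξ)^2)^((p-2)/2) * 1) v :=
    by have := (hasDerivAt_mul_sq_rpow (e := p-2) (by linarith) (v-ξ)).comp v ((hasDerivAt_id' v).sub_const ξ); exact this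
  have := (h1.const_mul p).add (h2.const_mul p)
  unfold Gd Gdd
  refine this.congr_deriv ?_
  ring

lemma core_ineq {v : ℝ} (hv : 0 < v) : Gd p ξ v < v * Gdd p ξ v := by
  have hk := key_ineq (q := p-2) (by linarith) hv ξ
  unfold Gd Gdd
  rw [sq_rpow, sq_rpow]
  have e1 : v + ξ = v + ξ := rfl
  nlinarith [mul_pos (show (0:ℝ) < p by linarith) hv,
    Real.rpow_nonneg (abs_nonneg (v+ξ)) (p-2), Real.rpow_nonneg (abs_nonneg (v-ξ)) (p-2),
    mul_lt_mul_of_pos_left hk (show (0:ℝ) < p by linarith)]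

lemma psi_mono : StrictMonoOn (fun v => Gd p ξ v / v) (Ioi (0:ℝ)) := by
  apply strictMonoOn_of_deriv_pos (convex_Ioi 0)
  · intro v hv
    exact (((hasDerivAt_Gd ξ hp v).div (hasDerivAt_id v) (ne_of_gt hv)).continuousAt).continuousWithinAt
  · intro v hv
    rw [interior_Ioi] at hv
    have hd : HasDerivAt (fun v => Gd p ξ v / v)
        ((Gdd p ξ v * v - Gd p ξ v * 1) / v^2) v :=
      (hasDerivAt_Gd ξ hp v).div (hasDerivAt_id v) (ne_of_gt hv)
    rw [hd.deriv]
    apply div_pos _ (pow_pos hv 2)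
    have := core_ineq ξ hp hv
    nlinarith [this]
end

section
variable {p : ℝ} (ξ : ℝ) (hp : 3 < p)
include hp

lemma continuous_Gf : Continuous (Gf p ξ) := by
  unfold Gf
  have c1 : Continuous (fun v:ℝ => ((v+ξ)^2)^(p/2)) :=
    ((continuous_id.add continuous_const).pow 2).rpow_const (fun v => Or.inr (by positivity))
  have c2 : Continuous (fun v:ℝ => ((v-ξ)^2)^(p/2)) :=
    ((continuous_id.sub continuous_const).pow 2).rpow_const (fun v => Or.inr (by positivity))
  exact c1.add c2

lemma hasDerivAt_h {u : ℝ} (hu : 0 < u) :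
    HasDerivAt (fun u => Gf p ξ (Real.sqrt u)) (Gd p ξ (Real.sqrt u) * (1 / (2 * Real.sqrt u))) u :=
  (hasDerivAt_Gf ξ hp (Real.sqrt u)).comp u (Real.hasDerivAt_sqrt (ne_of_gt hu))

lemma superadd {a b : ℝ} (ha : 0 < a) (hb : 0 < b) :
    Gf p ξ (Real.sqrt a) + Gf p ξ (Real.sqrt b) <
      Gf p ξ (Real.sqrt (a+b)) + Gf p ξ 0 := by
  set h : ℝ → ℝ := fun u => Gf p ξ (Real.sqrt u) with hh
  have hcont : Continuous h := (continuous_Gf ξ hp).comp Real.continuous_sqrt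
  set H : ℝ → ℝ := fun x => h (x + b) - h x with hH
  have hmono : StrictMonoOn H (Icc 0 a) := by
    apply strictMonoOn_of_deriv_pos (convex_Icc 0 a)
    · exact ((hcont.comp (continuous_id.add continuous_const)).sub hcont).continuousOn
    · intro x hx
      rw [interior_Icc] at hx
      have hx0 : 0 < x := hx.1
      have hxb : 0 < x + b := by linarith
      have d1 : HasDerivAt (fun x => h (x + b))
          (Gd p ξ (Real.sqrt (x+b)) * (1 / (2 * Real.sqrt (x+b))) * 1) x :=
        by have := (hasDerivAt_h ξ hp hxb).comp x ((hasDerivAt_id' x).add_const b); exact this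
      have d2 := (d1.sub (hasDerivAt_h ξ hp hx0))
      rw [show deriv H x = _ from d2.deriv]
      have s1 : (0:ℝ) < Real.sqrt x := Real.sqrt_pos.mpr hx0
      have s2 : (0:ℝ) < Real.sqrt (x+b) := Real.sqrt_pos.mpr hxb
      have slt : Real.sqrt x < Real.sqrt (x+b) := by
        apply Real.sqrt_lt_sqrt hx0.le; linarith
      have hψ := psi_mono ξ hp (mem_Ioi.mpr s1) (mem_Ioi.mpr s2) slt
      simp only at hψ
      have e1 : ∀ s : ℝ, 0 < s → Gd p ξ s * (1 / (2*s)) = (Gd p ξ s / s) / 2 := by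
        intro s hs; rw [mul_one_div, div_div, mul_comm]
      rw [mul_one, e1 _ s2, e1 _ s1]
      linarith
  have h1 : H 0 < H a := hmono (left_mem_Icc.mpr ha.le) (right_mem_Icc.mpr ha.le) ha
  simp only [hH, hh, zero_add, add_comm b a] at h1 ⊢
  have : Real.sqrt 0 = 0 := Real.sqrt_zero
  rw [this] at h1
  linarith
end


/-- For `p > 3`, `ξ ∈ ℝ`, `r > 0`, among all `(x, y)` with `x² + y² = r²` the sum
`|x+y+ξ|^p + |x+y-ξ|^p + |y-x+ξ|^p + |y-x-ξ|^p` attains its maximum exactly at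
points with `|x| = |y| = r/√2`. -/
theorem stmt_2 (p ξ r : ℝ) (hp : 3 < p) (hr : 0 < r)
    (F : ℝ → ℝ → ℝ)
    (hF : ∀ x y : ℝ, F x y =
      |x + y + ξ| ^ p + |x + y - ξ| ^ p + |y - x + ξ| ^ p + |y - x - ξ| ^ p)
    (x y : ℝ) (hxy : x ^ 2 + y ^ 2 = r ^ 2) :
    F x y ≤ F (r / Real.sqrt 2) (r / Real.sqrt 2) ∧
      (F x y = F (r / Real.sqrt 2) (r / Real.sqrt 2) ↔
        (|x| = r / Real.sqrt 2 ∧ |y| = r / Real.sqrt 2)) := by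
  set c := r / Real.sqrt 2 with hcdef
  have hs2 : (0:ℝ) < Real.sqrt 2 := Real.sqrt_pos.mpr (by norm_num)
  have hsq2 : Real.sqrt 2 * Real.sqrt 2 = 2 := Real.mul_self_sqrt (by norm_num)
  have hc : 0 < c := div_pos hr hs2
  have h2c : Real.sqrt (2*r^2) = c + c := by
    rw [Real.sqrt_mul (by norm_num : (0:ℝ) ≤ 2), Real.sqrt_sq hr.le, hcdef]
    field_simp
    linear_combination hsq2
  have hGabs : ∀ u : ℝ, Gf p ξ |u| = Gf p ξ u := by
    intro u
    rcases abs_cases u with ⟨h, _⟩ | ⟨h, _⟩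
    · rw [h]
    · rw [h]
      unfold Gf
      rw [show (-u+ξ)^2 = (u-ξ)^2 by ring, show (-u-ξ)^2 = (u+ξ)^2 by ring]
      exact add_comm _ _
  have hGsq : ∀ u : ℝ, Gf p ξ (Real.sqrt (u^2)) = Gf p ξ u := by
    intro u; rw [Real.sqrt_sq_eq_abs, hGabs]
  have hFG : ∀ a b : ℝ, F a b = Gf p ξ (a+b) + Gf p ξ (b-a) := by
    intro a b
    rw [hF]
    unfold Gf
    rw [sq_rpow, sq_rpow, sq_rpow, sq_rpow]
    ring
  have hst : (x+y)^2 + (y-x)^2 = 2*r^2 := by linear_combination 2 * hxy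
  have hFcc : F c c = Gf p ξ (Real.sqrt (2*r^2)) + Gf p ξ 0 := by
    rw [hFG c c, sub_self, ← h2c]
  have hlt : (x+y) ≠ 0 → (y-x) ≠ 0 → F x y < F c c := by
    intro hs ht
    have h1 := superadd ξ hp (pow_two_pos_of_ne_zero hs) (pow_two_pos_of_ne_zero ht)
    rw [hGsq, hGsq, hst] at h1
    rw [hFG x y, hFcc]
    exact h1
  have heq : (x+y) = 0 ∨ (y-x) = 0 → F x y = F c c := by
    intro h
    rcases h with h | h
    · have ht2 : (y-x)^2 = 2*r^2 := by linear_combination hst - (x+y+0) * h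
      rw [hFG x y, h, hFcc, ← hGsq (y-x), ht2]
      exact add_comm _ _
    · have hs2' : (x+y)^2 = 2*r^2 := by linear_combination hst - (y-x+0) * h
      rw [hFG x y, h, hFcc, ← hGsq (x+y), hs2']
  have hle : F x y ≤ F c c := by
    rcases em ((x+y) = 0 ∨ (y-x) = 0) with h | h
    · exact (heq h).le
    · push_neg at h
      exact (hlt h.1 h.2).le
  refine ⟨hle, ?_, ?_⟩
  · intro heqF
    have hor : (x+y) = 0 ∨ (y-x) = 0 := by
      by_contra hcon
      push_neg at hcon
      exact absurd heqF (ne_of_lt (hlt hcon.1 hcon.2))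
    have hx2 : x^2 = y^2 := by
      rcases hor with h | h
      · have : x = -y := by linarith
        rw [this]; ring
      · have : y = x := by linarith
        rw [this]
    have hcsq : c^2 = r^2/2 := by
      rw [hcdef, div_pow, Real.sq_sqrt (by norm_num : (0:ℝ) ≤ 2)]
    constructor
    · rw [← Real.sqrt_sq_eq_abs, show x^2 = c^2 by linarith, Real.sqrt_sq hc.le]
    · rw [← Real.sqrt_sq_eq_abs, show y^2 = c^2 by linarith, Real.sqrt_sq hc.le]
  · rintro ⟨hxc, hyc⟩
    have : |x| = |y| := hxc.trans hyc.symm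
    rcases abs_eq_abs.mp this with h | h
    · exact heq (Or.inr (by rw [h]; ring))
    · exact heq (Or.inl (by rw [h]; ring))
end

section
/- Let p > 3 and ξ ∈ ℝ be fixed, and r > 0. Among all real coefficient sequences (a_1, …, a_n) with Σ_{k=1}^n a_k² = r², the quantity E[|ξ + Σ_{k=1}^n a_k r_k|^p]^{1/p}, where r_k are independent Rademacher (±1 with probability 1/2 each) random variables, attains its maximum exactly when |a_k| = r/√n for every k. -/
open Set

/-- Derivative of `|z| ^ c * z` for `1 < c`. -/
lemma hasDerivAt_abs_rpow_mul_self {c : ℝ} (hc : 1 < c) (y : ℝ) :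
    HasDerivAt (fun z : ℝ => |z| ^ c * z) ((c + 1) * |y| ^ c) y := by
  have h1 : HasDerivAt (fun z : ℝ => |z| ^ c) (c * |y| ^ (c - 2) * y) y :=
    hasDerivAt_abs_rpow y hc
  have h2 := h1.mul (hasDerivAt_id y)
  have key : c * |y| ^ (c - 2) * y * y + |y| ^ c * 1 = (c + 1) * |y| ^ c := by
    rcases eq_or_ne y 0 with rfl | hy
    · simp [Real.zero_rpow (by linarith : c ≠ 0)]
    · have hy' : (0:ℝ) < |y| := abs_pos.mpr hy
      have : |y| ^ (c - 2) * (y * y) = |y| ^ c := by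
        have h2 : y * y = |y| ^ (2:ℝ) := by
          rw [show (2:ℝ) = ((2:ℕ):ℝ) by norm_num, Real.rpow_natCast, sq_abs, sq]
        rw [h2, ← Real.rpow_add hy']
        norm_num
      calc c * |y| ^ (c - 2) * y * y + |y| ^ c * 1
          = c * (|y| ^ (c - 2) * (y * y)) + |y| ^ c := by ring
        _ = (c + 1) * |y| ^ c := by rw [this]; ring
  rw [← key]
  exact h2

/-- `|y| ^ r` is strictly convex on `ℝ` for `1 < r`. -/
lemma strictConvexOn_abs_rpow {r : ℝ} (hr : 1 < r) :
    StrictConvexOn ℝ univ (fun y : ℝ => |y| ^ r) := by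
  refine ⟨convex_univ, ?_⟩
  intro x _ y _ hxy a b ha hb hab
  simp only [smul_eq_mul]
  rcases eq_or_ne |x| |y| with he | hne
  · have hxny : x = -y := by
      rcases abs_eq_abs.mp he with h | h
      · exact absurd h hxy
      · exact h
    have hy0 : y ≠ 0 := by rintro rfl; simp [hxny] at hxy
    have habs : |a * x + b * y| < |y| := by
      rw [hxny, show a * -y + b * y = (b - a) * y by ring, abs_mul]
      have hba : |b - a| < 1 := by rw [abs_lt]; constructor <;> linarith
      calc |b - a| * |y| < 1 * |y| := mul_lt_mul_of_pos_right hba (abs_pos.mpr hy0)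
        _ = |y| := one_mul _
    calc |a * x + b * y| ^ r < |y| ^ r :=
          Real.rpow_lt_rpow (abs_nonneg _) habs (by linarith)
      _ = a * |x| ^ r + b * |y| ^ r := by rw [he, ← add_mul, hab, one_mul]
  · have h1 : |a * x + b * y| ≤ a * |x| + b * |y| := by
      calc |a * x + b * y| ≤ |a * x| + |b * y| := abs_add_le _ _
        _ = a * |x| + b * |y| := by
            rw [abs_mul, abs_mul, abs_of_pos ha, abs_of_pos hb]
    have h2 := (strictConvexOn_rpow hr).2 (mem_Ici.mpr (abs_nonneg x))
      (mem_Ici.mpr (abs_nonneg y)) hne ha hb hab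
    simp only [smul_eq_mul] at h2
    calc |a * x + b * y| ^ r ≤ (a * |x| + b * |y|) ^ r :=
          Real.rpow_le_rpow (abs_nonneg _) h1 (by linarith)
      _ < a * |x| ^ r + b * |y| ^ r := h2

/-- `x ↦ |s+x|^r + |s-x|^r` is strictly increasing on `[0, ∞)` for `1 < r`. -/
lemma w_strictMonoOn {r : ℝ} (hr : 1 < r) (s : ℝ) :
    StrictMonoOn (fun x : ℝ => |s + x| ^ r + |s - x| ^ r) (Ici 0) := by
  intro x1 hx1 x2 _ h12
  have hx1' : (0:ℝ) ≤ x1 := hx1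
  have hx2' : 0 < x2 := lt_of_le_of_lt hx1' h12
  set lam : ℝ := (x1 + x2) / (2 * x2) with hlamdef
  have hlam0 : 0 < lam := by positivity
  have hlam1 : lam < 1 := by
    rw [hlamdef, div_lt_one (by positivity)]; linarith
  have key1 : s + x1 = lam * (s + x2) + (1 - lam) * (s - x2) := by
    have hl2 : lam * (2 * x2) = x1 + x2 := by rw [hlamdef]; exact div_mul_cancel₀ _ (by positivity)
    linear_combination -hl2
  have key2 : s - x1 = (1 - lam) * (s + x2) + lam * (s - x2) := by
    have hl2 : lam * (2 * x2) = x1 + x2 := by rw [hlamdef]; exact div_mul_cancel₀ _ (by positivity)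
    linear_combination hl2
  have hne : s + x2 ≠ s - x2 := by intro h; linarith [eq_of_sub_eq_zero (by linarith : (s + x2) - (s - x2) = 0)]
  have h1 := (strictConvexOn_abs_rpow hr).2
    (mem_univ (s + x2)) (mem_univ (s - x2)) hne hlam0
    (show (0:ℝ) < 1 - lam by linarith) (show lam + (1 - lam) = 1 by ring)
  have h2 := (strictConvexOn_abs_rpow hr).2
    (mem_univ (s + x2)) (mem_univ (s - x2)) hne
    (show (0:ℝ) < 1 - lam by linarith) hlam0 (show (1 - lam) + lam = 1 by ring)
  simp only [smul_eq_mul] at h1 h2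
  rw [← key1] at h1
  rw [← key2] at h2
  simp only
  linarith

/-- The odd part difference `G` is strictly convex on `[0,∞)` for `1 < c`. -/
lemma G_strictConvexOn {c : ℝ} (hc : 1 < c) (s : ℝ) :
    StrictConvexOn ℝ (Ici 0)
      (fun x : ℝ => |s + x| ^ c * (s + x) - |s - x| ^ c * (s - x)) := by
  have hder : ∀ x : ℝ, HasDerivAt
      (fun x : ℝ => |s + x| ^ c * (s + x) - |s - x| ^ c * (s - x))
      ((c + 1) * (|s + x| ^ c + |s - x| ^ c)) x := by
    intro x
    have h1 := (hasDerivAt_abs_rpow_mul_self hc (s + x)).comp x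
      ((hasDerivAt_id x).const_add s)
    have h2 := (hasDerivAt_abs_rpow_mul_self hc (s - x)).comp x
      ((hasDerivAt_id x).const_sub s)
    have h3 := h1.sub h2
    exact h3.congr_deriv (by ring)
  apply StrictMonoOn.strictConvexOn_of_deriv (convex_Ici 0)
  · exact (continuous_iff_continuousAt.mpr fun x => (hder x).continuousAt).continuousOn
  · rw [interior_Ici]
    intro x1 hx1 x2 hx2 h12
    rw [(hder x1).deriv, (hder x2).deriv]
    have := w_strictMonoOn hc s (mem_Ici.mpr (le_of_lt hx1)) (mem_Ici.mpr (le_of_lt (lt_trans hx1 h12))) h12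
    exact mul_lt_mul_of_pos_left this (by linarith)

/-- The secant slope of `G` from `0` is strictly monotone. -/
lemma G_slope_strictMonoOn {c : ℝ} (hc : 1 < c) (s : ℝ) {x1 x2 : ℝ}
    (h1 : 0 < x1) (h12 : x1 < x2) :
    (|s + x1| ^ c * (s + x1) - |s - x1| ^ c * (s - x1)) / x1
      < (|s + x2| ^ c * (s + x2) - |s - x2| ^ c * (s - x2)) / x2 := by
  have hG := G_strictConvexOn hc s
  have key := hG.secant_strict_mono (a := 0) (x := x1) (y := x2)
    (mem_Ici.mpr le_rfl) (mem_Ici.mpr h1.le) (mem_Ici.mpr (by linarith))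
    (ne_of_gt h1) (ne_of_gt (h1.trans h12)) h12
  simp only [add_zero, sub_zero] at key
  have h0 : |s + 0| ^ c * (s + 0) - |s - 0| ^ c * (s - 0) = 0 := by simp
  simpa [h0] using key

/-- `t ↦ |s + √t|^p + |s - √t|^p` is strictly convex on `[0,∞)` for `p > 3`. -/
lemma chi_strictConvexOn {p : ℝ} (hp : 3 < p) (s : ℝ) :
    StrictConvexOn ℝ (Ici 0)
      (fun t : ℝ => |s + Real.sqrt t| ^ p + |s - Real.sqrt t| ^ p) := by
  have hc : 1 < p - 2 := by linarith
  have hg : ∀ x : ℝ, HasDerivAt (fun x : ℝ => |s + x| ^ p + |s - x| ^ p)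
      (p * (|s + x| ^ (p - 2) * (s + x) - |s - x| ^ (p - 2) * (s - x))) x := by
    intro x
    have h1 := (hasDerivAt_abs_rpow (s + x) (show (1:ℝ) < p by linarith)).comp x
      ((hasDerivAt_id x).const_add s)
    have h2 := (hasDerivAt_abs_rpow (s - x) (show (1:ℝ) < p by linarith)).comp x
      ((hasDerivAt_id x).const_sub s)
    have h3 := h1.add h2
    exact h3.congr_deriv (by ring)
  have hchi : ∀ t : ℝ, 0 < t → HasDerivAt
      (fun t : ℝ => |s + Real.sqrt t| ^ p + |s - Real.sqrt t| ^ p)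
      ((p * (|s + Real.sqrt t| ^ (p - 2) * (s + Real.sqrt t)
        - |s - Real.sqrt t| ^ (p - 2) * (s - Real.sqrt t))) * (1 / (2 * Real.sqrt t))) t := by
    intro t ht
    exact (hg (Real.sqrt t)).comp t (Real.hasDerivAt_sqrt (ne_of_gt ht))
  apply StrictMonoOn.strictConvexOn_of_deriv (convex_Ici 0)
  · apply Continuous.continuousOn
    have habs : ∀ f : ℝ → ℝ, Continuous f → Continuous (fun t => |f t| ^ p) := by
      intro f hf
      exact (hf.abs).rpow_const (fun x => Or.inr (by linarith))
    exact (habs _ (continuous_const.add Real.continuous_sqrt)).add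
      (habs _ (continuous_const.sub Real.continuous_sqrt))
  · rw [interior_Ici]
    intro t1 ht1 t2 ht2 h12
    rw [(hchi t1 ht1).deriv, (hchi t2 ht2).deriv]
    have hs1 : 0 < Real.sqrt t1 := Real.sqrt_pos.mpr ht1
    have hs2 : 0 < Real.sqrt t2 := Real.sqrt_pos.mpr ht2
    have hlt : Real.sqrt t1 < Real.sqrt t2 := Real.sqrt_lt_sqrt ht1.le h12
    have key := G_slope_strictMonoOn hc s hs1 hlt
    have e1 : ∀ u : ℝ, 0 < u →
        (p * (|s + u| ^ (p - 2) * (s + u) - |s - u| ^ (p - 2) * (s - u))) * (1 / (2 * u))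
          = (p / 2) * ((|s + u| ^ (p - 2) * (s + u) - |s - u| ^ (p - 2) * (s - u)) / u) := by
      intro u hu
      field_simp
    rw [e1 _ hs1, e1 _ hs2]
    exact mul_lt_mul_of_pos_left key (by linarith)

/-- Pairwise strict inequality for the chi function. -/
lemma chi_pair_lt {p : ℝ} (hp : 3 < p) (s : ℝ) {α β : ℝ} (hα : 0 < α) (hβ : 0 < β) :
    (|s + Real.sqrt α| ^ p + |s - Real.sqrt α| ^ p)
      + (|s + Real.sqrt β| ^ p + |s - Real.sqrt β| ^ p)
      < 2 * |s| ^ p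
        + (|s + Real.sqrt (α + β)| ^ p + |s - Real.sqrt (α + β)| ^ p) := by
  have hχ := chi_strictConvexOn hp s
  set T := α + β with hT
  have hT0 : 0 < T := by positivity
  have h1 := hχ.2 (mem_Ici.mpr le_rfl) (mem_Ici.mpr hT0.le)
    (show (0:ℝ) ≠ T by exact ne_of_lt hT0)
    (show 0 < β / T by positivity) (show 0 < α / T by positivity)
    (show β / T + α / T = 1 by field_simp <;> linarith)
  have h2 := hχ.2 (mem_Ici.mpr le_rfl) (mem_Ici.mpr hT0.le)
    (show (0:ℝ) ≠ T by exact ne_of_lt hT0)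
    (show 0 < α / T by positivity) (show 0 < β / T by positivity)
    (show α / T + β / T = 1 by field_simp <;> linarith)
  simp only [smul_eq_mul, mul_zero, zero_add] at h1 h2
  have eα : α / T * T = α := by field_simp
  have eβ : β / T * T = β := by field_simp
  rw [eα] at h1
  rw [eβ] at h2
  have hsum : β / T + α / T = 1 := by field_simp <;> linarith
  have h0 : |s + Real.sqrt 0| ^ p + |s - Real.sqrt 0| ^ p = 2 * |s| ^ p := by
    simp [Real.sqrt_zero]; ring
  rw [h0] at h1 h2
  have hkey : β / T * (2 * |s| ^ p) + α / T * (|s + Real.sqrt T| ^ p + |s - Real.sqrt T| ^ p)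
      + (α / T * (2 * |s| ^ p) + β / T * (|s + Real.sqrt T| ^ p + |s - Real.sqrt T| ^ p))
      = 2 * |s| ^ p + (|s + Real.sqrt T| ^ p + |s - Real.sqrt T| ^ p) := by
    have e : ∀ A B : ℝ, β / T * A + α / T * B + (α / T * A + β / T * B)
        = (β / T + α / T) * (A + B) := by intro A B; ring
    rw [e, hsum, one_mul]
  linarith

lemma abs_pair_sqrt_sq (p s u : ℝ) :
    |s + Real.sqrt (u ^ 2)| ^ p + |s - Real.sqrt (u ^ 2)| ^ p
      = |s + u| ^ p + |s - u| ^ p := by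
  rw [Real.sqrt_sq_eq_abs]
  rcases le_or_gt 0 u with h | h
  · rw [abs_of_nonneg h]
  · rw [abs_of_neg h, show s + -u = s - u by ring, show s - -u = s + u by ring, add_comm]

lemma four_lt {p : ℝ} (hp : 3 < p) (s x y : ℝ) (hxy : |x| ≠ |y|) :
    |s + (x + y)| ^ p + |s - (x + y)| ^ p + (|s + (x - y)| ^ p + |s - (x - y)| ^ p)
      < 2 * |s| ^ p + (|s + Real.sqrt (2 * (x ^ 2 + y ^ 2))| ^ p
          + |s - Real.sqrt (2 * (x ^ 2 + y ^ 2))| ^ p) := by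
  have h1 : x + y ≠ 0 := by
    intro h
    apply hxy
    rw [show x = -y by linarith, abs_neg]
  have h2 : x - y ≠ 0 := by
    intro h
    apply hxy
    rw [show x = y by linarith]
  have hα : 0 < (x + y) ^ 2 := by positivity
  have hβ : 0 < (x - y) ^ 2 := by positivity
  have key := chi_pair_lt hp s hα hβ
  rw [abs_pair_sqrt_sq, abs_pair_sqrt_sq,
    show (x + y) ^ 2 + (x - y) ^ 2 = 2 * (x ^ 2 + y ^ 2) by ring] at key
  linarith

lemma four_le {p : ℝ} (hp : 3 < p) (s x y : ℝ) :
    |s + (x + y)| ^ p + |s - (x + y)| ^ p + (|s + (x - y)| ^ p + |s - (x - y)| ^ p)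
      ≤ 2 * |s| ^ p + (|s + Real.sqrt (2 * (x ^ 2 + y ^ 2))| ^ p
          + |s - Real.sqrt (2 * (x ^ 2 + y ^ 2))| ^ p) := by
  rcases eq_or_ne |x| |y| with he | hne
  · rcases abs_eq_abs.mp he with h | h
    · subst h
      rw [show 2 * (x ^ 2 + x ^ 2) = (x + x) ^ 2 by ring, abs_pair_sqrt_sq]
      simp only [sub_self, add_zero, sub_zero]
      linarith
    · subst h
      rw [show 2 * ((-y) ^ 2 + y ^ 2) = (-y - y) ^ 2 by ring, abs_pair_sqrt_sq]
      simp only [neg_add_cancel, add_zero, sub_zero]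
      linarith
  · exact (four_lt hp s x y hne).le

lemma sum_update_fn {n : ℕ} (g : Fin n → ℝ) (j : Fin n) (v : ℝ) :
    ∑ k, Function.update g j v k = ∑ k, g k - g j + v := by
  rw [Finset.sum_update_of_mem (Finset.mem_univ j), ← Finset.erase_eq]
  have := Finset.add_sum_erase Finset.univ g (Finset.mem_univ j)
  linarith

lemma sum_mul_update {n : ℕ} (a : Fin n → ℝ) (η : Fin n → Bool) (j : Fin n) (b : Bool) :
    ∑ k, a k * (if Function.update η j b k then (1:ℝ) else -1)
      = ∑ k, a k * (if η k then 1 else -1)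
        - a j * (if η j then 1 else -1) + a j * (if b then 1 else -1) := by
  have hfun : ∀ k, a k * (if Function.update η j b k then (1:ℝ) else -1)
      = Function.update (fun k => a k * (if η k then (1:ℝ) else -1)) j
          (a j * (if b then 1 else -1)) k := by
    intro k
    rcases eq_or_ne k j with rfl | hk
    · simp
    · simp [Function.update_of_ne hk]
  rw [Finset.sum_congr rfl (fun k _ => hfun k), sum_update_fn]

lemma sum_coeff_update {n : ℕ} (a : Fin n → ℝ) (v : ℝ) (j : Fin n) (η : Fin n → Bool) :
    ∑ k, (Function.update a j v) k * (if η k then (1:ℝ) else -1)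
      = ∑ k, a k * (if η k then 1 else -1)
        - a j * (if η j then 1 else -1) + v * (if η j then 1 else -1) := by
  have hfun : ∀ k, (Function.update a j v) k * (if η k then (1:ℝ) else -1)
      = Function.update (fun k => a k * (if η k then (1:ℝ) else -1)) j
          (v * (if η j then 1 else -1)) k := by
    intro k
    rcases eq_or_ne k j with rfl | hk
    · simp
    · simp [Function.update_of_ne hk]
  rw [Finset.sum_congr rfl (fun k _ => hfun k), sum_update_fn]

lemma sum_sq_update {n : ℕ} (a : Fin n → ℝ) (v : ℝ) (j : Fin n) :
    ∑ k, (Function.update a j v) k ^ 2 = ∑ k, a k ^ 2 - a j ^ 2 + v ^ 2 := by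
  have hfun : ∀ k, (Function.update a j v) k ^ 2
      = Function.update (fun k => a k ^ 2) j (v ^ 2) k := by
    intro k
    rcases eq_or_ne k j with rfl | hk
    · simp
    · simp [Function.update_of_ne hk]
  rw [Finset.sum_congr rfl (fun k _ => hfun k), sum_update_fn]

lemma sum_split_one {n : ℕ} (f : (Fin n → Bool) → ℝ) (i : Fin n) :
    2 * ∑ ε : Fin n → Bool, f ε
      = ∑ ε : Fin n → Bool,
          (f (Function.update ε i true) + f (Function.update ε i false)) := by
  have hinv : Function.Involutive
      (fun ε : Fin n → Bool => Function.update ε i (!ε i)) := by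
    intro ε
    funext k
    rcases eq_or_ne k i with rfl | hk
    · simp
    · simp [Function.update_of_ne hk]
  have hperm := Equiv.sum_comp hinv.toPerm f
  have step1 : ∑ ε : Fin n → Bool,
      (f (Function.update ε i true) + f (Function.update ε i false))
      = ∑ ε : Fin n → Bool,
          (f (Function.update ε i (ε i)) + f (Function.update ε i (!ε i))) := by
    apply Finset.sum_congr rfl
    intro ε _
    cases h : ε i <;> simp [h] <;> ring
  rw [step1, Finset.sum_add_distrib]
  have e1 : ∑ ε : Fin n → Bool, f (Function.update ε i (ε i))
      = ∑ ε : Fin n → Bool, f ε := by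
    apply Finset.sum_congr rfl
    intro ε _
    rw [Function.update_eq_self]
  have e2 : ∑ ε : Fin n → Bool, f (Function.update ε i (!ε i))
      = ∑ ε : Fin n → Bool, f ε := hperm
  rw [e1, e2]
  ring

lemma sum_split_pair {n : ℕ} (f : (Fin n → Bool) → ℝ) (i j : Fin n) :
    4 * ∑ ε : Fin n → Bool, f ε
      = ∑ ε : Fin n → Bool,
          (f (Function.update (Function.update ε i true) j true)
            + f (Function.update (Function.update ε i true) j false)
            + f (Function.update (Function.update ε i false) j true)
            + f (Function.update (Function.update ε i false) j false)) := by
  set A : (Fin n → Bool) → ℝ :=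
    fun ε => f (Function.update ε j true) + f (Function.update ε j false) with hA
  have h1 : 2 * ∑ ε : Fin n → Bool, f ε = ∑ ε : Fin n → Bool, A ε := sum_split_one f j
  have h2 : 2 * ∑ ε : Fin n → Bool, A ε
      = ∑ ε : Fin n → Bool,
          (A (Function.update ε i true) + A (Function.update ε i false)) :=
    sum_split_one A i
  calc 4 * ∑ ε : Fin n → Bool, f ε = 2 * (2 * ∑ ε : Fin n → Bool, f ε) := by ring
    _ = 2 * ∑ ε : Fin n → Bool, A ε := by rw [h1]
    _ = ∑ ε : Fin n → Bool,
          (A (Function.update ε i true) + A (Function.update ε i false)) := h2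
    _ = _ := by
        apply Finset.sum_congr rfl
        intro ε _
        simp only [hA]
        ring

lemma step_main {p ξ : ℝ} (hp : 3 < p) {n : ℕ} (a : Fin n → ℝ) {i j : Fin n}
    (hij : i ≠ j) {c : ℝ} (hc : c = Real.sqrt ((a i ^ 2 + a j ^ 2) / 2))
    {a' : Fin n → ℝ} (ha' : a' = Function.update (Function.update a i c) j c) :
    ((∑ ε : Fin n → Bool, |ξ + ∑ k, a k * (if ε k then 1 else -1)| ^ p)
      ≤ ∑ ε : Fin n → Bool, |ξ + ∑ k, a' k * (if ε k then 1 else -1)| ^ p)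
    ∧ (|a i| ≠ |a j| →
      (∑ ε : Fin n → Bool, |ξ + ∑ k, a k * (if ε k then 1 else -1)| ^ p)
        < ∑ ε : Fin n → Bool, |ξ + ∑ k, a' k * (if ε k then 1 else -1)| ^ p) := by
  have hsq : c ^ 2 = (a i ^ 2 + a j ^ 2) / 2 := by
    rw [hc]; exact Real.sq_sqrt (by positivity)
  have hcnn : 0 ≤ c := hc ▸ Real.sqrt_nonneg _
  have hji : j ≠ i := hij.symm
  have ha'i : a' i = c := by
    rw [ha', Function.update_of_ne hij, Function.update_self]
  have ha'j : a' j = c := by rw [ha', Function.update_self]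
  set x := a i with hx
  set y := a j with hy
  set fa : (Fin n → Bool) → ℝ :=
    fun η => |ξ + ∑ k, a k * (if η k then (1:ℝ) else -1)| ^ p with hfa
  set fb : (Fin n → Bool) → ℝ :=
    fun η => |ξ + ∑ k, a' k * (if η k then (1:ℝ) else -1)| ^ p with hfb
  set S : (Fin n → Bool) → ℝ :=
    fun η => ∑ k, a k * (if η k then (1:ℝ) else -1)
      - x * (if η i then 1 else -1) - y * (if η j then 1 else -1) with hS
  have key1 : ∀ (η : Fin n → Bool) (b1 b2 : Bool),
      ∑ k, a k * (if (Function.update (Function.update η i b1) j b2) k then (1:ℝ) else -1)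
        = S η + x * (if b1 then 1 else -1) + y * (if b2 then 1 else -1) := by
    intro η b1 b2
    rw [sum_mul_update a (Function.update η i b1) j b2, sum_mul_update a η i b1,
      Function.update_of_ne hji]
    simp only [hS]
    ring
  have hsum' : ∀ η : Fin n → Bool,
      ∑ k, a' k * (if η k then (1:ℝ) else -1)
        = ∑ k, a k * (if η k then (1:ℝ) else -1)
          - x * (if η i then 1 else -1) - y * (if η j then 1 else -1)
          + c * (if η i then 1 else -1) + c * (if η j then 1 else -1) := by
    intro η
    rw [ha', sum_coeff_update (Function.update a i c) c j η, sum_coeff_update a c i η,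
      Function.update_of_ne hji]
    ring
  have key2 : ∀ (η : Fin n → Bool) (b1 b2 : Bool),
      ∑ k, a' k * (if (Function.update (Function.update η i b1) j b2) k then (1:ℝ) else -1)
        = S η + c * (if b1 then 1 else -1) + c * (if b2 then 1 else -1) := by
    intro η b1 b2
    rw [sum_mul_update a' (Function.update η i b1) j b2, sum_mul_update a' η i b1,
      Function.update_of_ne hji, hsum' η, ha'i, ha'j]
    simp only [hS]
    ring
  have h2c : Real.sqrt (2 * (x ^ 2 + y ^ 2)) = c + c := by
    rw [show 2 * (x ^ 2 + y ^ 2) = (c + c) ^ 2 by rw [show (c+c)^2 = 4 * c^2 by ring, hsq]; ring,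
      Real.sqrt_sq (by positivity)]
  -- per-ε four term identities
  have hper : ∀ η : Fin n → Bool,
      (fa (Function.update (Function.update η i true) j true)
        + fa (Function.update (Function.update η i true) j false)
        + fa (Function.update (Function.update η i false) j true)
        + fa (Function.update (Function.update η i false) j false)
        = |(ξ + S η) + (x + y)| ^ p + |(ξ + S η) - (x + y)| ^ p
          + (|(ξ + S η) + (x - y)| ^ p + |(ξ + S η) - (x - y)| ^ p))
      ∧ (fb (Function.update (Function.update η i true) j true)
        + fb (Function.update (Function.update η i true) j false)
        + fb (Function.update (Function.update η i false) j true)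
        + fb (Function.update (Function.update η i false) j false)
        = 2 * |ξ + S η| ^ p
          + (|(ξ + S η) + Real.sqrt (2 * (x ^ 2 + y ^ 2))| ^ p
            + |(ξ + S η) - Real.sqrt (2 * (x ^ 2 + y ^ 2))| ^ p)) := by
    intro η
    constructor
    · simp only [hfa]
      rw [key1 η true true, key1 η true false, key1 η false true, key1 η false false]
      norm_num
      rw [show ξ + (S η + x + y) = (ξ + S η) + (x + y) by ring,
        show ξ + (S η + x + -y) = (ξ + S η) + (x - y) by ring,
        show ξ + (S η + -x + y) = (ξ + S η) - (x - y) by ring,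
        show ξ + (S η + -x + -y) = (ξ + S η) - (x + y) by ring]
      ring
    · simp only [hfb]
      rw [h2c, key2 η true true, key2 η true false, key2 η false true, key2 η false false]
      norm_num
      rw [show ξ + (S η + c + c) = (ξ + S η) + (c + c) by ring,
        show ξ + (S η + -c + -c) = (ξ + S η) - (c + c) by ring]
      ring
  have hsplit_a := sum_split_pair fa i j
  have hsplit_b := sum_split_pair fb i j
  constructor
  · have hle : (∑ η : Fin n → Bool,
        (fa (Function.update (Function.update η i true) j true)
          + fa (Function.update (Function.update η i true) j false)
          + fa (Function.update (Function.update η i false) j true)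
          + fa (Function.update (Function.update η i false) j false)))
        ≤ ∑ η : Fin n → Bool,
        (fb (Function.update (Function.update η i true) j true)
          + fb (Function.update (Function.update η i true) j false)
          + fb (Function.update (Function.update η i false) j true)
          + fb (Function.update (Function.update η i false) j false)) := by
      apply Finset.sum_le_sum
      intro η _
      rw [(hper η).1, (hper η).2]
      exact four_le hp (ξ + S η) x y
    linarith
  · intro hne
    have hlt : (∑ η : Fin n → Bool,
        (fa (Function.update (Function.update η i true) j true)
          + fa (Function.update (Function.update η i true) j false)
          + fa (Function.update (Function.update η i false) j true)
          + fa (Function.update (Function.update η i false) j false)))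
        < ∑ η : Fin n → Bool,
        (fb (Function.update (Function.update η i true) j true)
          + fb (Function.update (Function.update η i true) j false)
          + fb (Function.update (Function.update η i false) j true)
          + fb (Function.update (Function.update η i false) j false)) := by
      apply Finset.sum_lt_sum_of_nonempty Finset.univ_nonempty
      intro η _
      rw [(hper η).1, (hper η).2]
      exact four_lt hp (ξ + S η) x y hne
    linarith

lemma sign_invariance {p ξ : ℝ} {n : ℕ} (a : Fin n → ℝ) :
    (∑ ε : Fin n → Bool, |ξ + ∑ k, a k * (if ε k then (1:ℝ) else -1)| ^ p)
      = ∑ ε : Fin n → Bool, |ξ + ∑ k, |a k| * (if ε k then (1:ℝ) else -1)| ^ p := by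
  classical
  set σ : (Fin n → Bool) → (Fin n → Bool) :=
    fun ε k => if a k < 0 then !(ε k) else ε k with hσ
  have hinv : Function.Involutive σ := by
    intro ε
    funext k
    by_cases h : a k < 0 <;> simp [hσ, h]
  have hcomp : (∑ ε : Fin n → Bool, |ξ + ∑ k, a k * (if σ ε k then (1:ℝ) else -1)| ^ p)
      = ∑ ε : Fin n → Bool, |ξ + ∑ k, a k * (if ε k then (1:ℝ) else -1)| ^ p :=
    Equiv.sum_comp hinv.toPerm
      (fun ε => |ξ + ∑ k, a k * (if ε k then (1:ℝ) else -1)| ^ p)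
  rw [← hcomp]
  apply Finset.sum_congr rfl
  intro ε _
  have harg : ∑ k, |a k| * (if ε k then (1:ℝ) else -1)
      = ∑ k, a k * (if σ ε k then (1:ℝ) else -1) := by
    apply Finset.sum_congr rfl
    intro k _
    rcases lt_or_ge (a k) 0 with h | h
    · simp only [hσ, if_pos h]
      cases hb : ε k <;> simp [abs_of_neg h]
    · simp only [hσ, if_neg (not_lt.mpr h), abs_of_nonneg h]
  rw [harg]




/-- For `p > 3`, `ξ ∈ ℝ`, `r > 0`: among all coefficients `(a_1, …, a_n)` with
`Σ a_k² = r²`, the quantity `E[|ξ + Σ a_k r_k|^p]^(1/p)` (with `r_k` independent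
Rademacher variables, modeled by averaging over all sign choices) attains its
maximum exactly when `|a_k| = r/√n` for every `k`. -/
theorem stmt_4 (p ξ r : ℝ) (hp : 3 < p) (hr : 0 < r) (n : ℕ) (hn : 0 < n)
    (E : (Fin n → ℝ) → ℝ)
    (hE : ∀ a : Fin n → ℝ, E a =
      ((1 / 2 ^ n : ℝ) *
        ∑ ε : Fin n → Bool, |ξ + ∑ k, a k * (if ε k then 1 else -1)| ^ p) ^ (1 / p))
    (a : Fin n → ℝ) (ha : ∑ k, (a k) ^ 2 = r ^ 2) :
    E a ≤ E (fun _ => r / Real.sqrt n) ∧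
      (E a = E (fun _ => r / Real.sqrt n) ↔ ∀ k, |a k| = r / Real.sqrt n) := by
  classical
  have hp0 : 0 < p := by linarith
  have hn' : (0:ℝ) < n := by exact_mod_cast hn
  have hsn : 0 < Real.sqrt n := Real.sqrt_pos.mpr hn'
  set F : (Fin n → ℝ) → ℝ :=
    fun b => ∑ ε : Fin n → Bool, |ξ + ∑ k, b k * (if ε k then (1:ℝ) else -1)| ^ p with hF
  set req : Fin n → ℝ := fun _ => r / Real.sqrt n with hreq
  have hE' : ∀ b, E b = ((1 / 2 ^ n : ℝ) * F b) ^ (1 / p) := by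
    intro b
    rw [hE b]
  have hFnonneg : ∀ b, 0 ≤ F b := by
    intro b
    simp only [hF]
    exact Finset.sum_nonneg fun ε _ => Real.rpow_nonneg (abs_nonneg _) p
  have hreqmem : ∑ k, req k ^ 2 = r ^ 2 := by
    simp only [hreq, Finset.sum_const, Finset.card_univ, Fintype.card_fin, nsmul_eq_mul,
      div_pow, Real.sq_sqrt hn'.le] <;> field_simp
  -- all coordinates equal in absolute value forces |b k| = r / √n
  have hall : ∀ b : Fin n → ℝ, (∑ k, b k ^ 2 = r ^ 2) →
      (∀ i' j' : Fin n, |b i'| = |b j'|) → ∀ k, |b k| = r / Real.sqrt n := by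
    intro b hb heq k
    have h1 : ∑ k' : Fin n, b k' ^ 2 = ∑ _k' : Fin n, |b k| ^ 2 := by
      apply Finset.sum_congr rfl
      intro k' _
      rw [← sq_abs, heq k' k]
    have h2 : (n : ℝ) * |b k| ^ 2 = r ^ 2 := by
      rw [← hb, h1, Finset.sum_const, Finset.card_univ, Fintype.card_fin, nsmul_eq_mul]
    have h3 : |b k| ^ 2 = r ^ 2 / n := by
      rw [eq_div_iff (ne_of_gt hn')]
      linear_combination h2
    calc |b k| = Real.sqrt (|b k| ^ 2) := (Real.sqrt_sq (abs_nonneg _)).symm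
      _ = Real.sqrt (r ^ 2 / n) := by rw [h3]
      _ = Real.sqrt (r ^ 2) / Real.sqrt n := Real.sqrt_div (sq_nonneg r) n
      _ = r / Real.sqrt n := by rw [Real.sqrt_sq hr.le]
  have hpairs : ∀ b : Fin n → ℝ, (∑ k, b k ^ 2 = r ^ 2) →
      (∃ k, |b k| ≠ r / Real.sqrt n) → ∃ i j : Fin n, i ≠ j ∧ |b i| ≠ |b j| := by
    intro b hb hk
    by_contra hcon
    push_neg at hcon
    obtain ⟨k0, hk0⟩ := hk
    apply hk0
    apply hall b hb _ k0
    intro i' j'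
    rcases eq_or_ne i' j' with rfl | hne
    · rfl
    · exact hcon i' j' hne
  -- strict improvement step
  have stepA : ∀ b : Fin n → ℝ, (∑ k, b k ^ 2 = r ^ 2) →
      (∃ k, |b k| ≠ r / Real.sqrt n) →
      ∃ b', (∑ k, b' k ^ 2 = r ^ 2) ∧ F b < F b' := by
    intro b hb hk
    obtain ⟨i, j, hij, hne⟩ := hpairs b hb hk
    set c := Real.sqrt ((b i ^ 2 + b j ^ 2) / 2) with hc
    set b' := Function.update (Function.update b i c) j c with hb'
    have hsq : c ^ 2 = (b i ^ 2 + b j ^ 2) / 2 := by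
      rw [hc]; exact Real.sq_sqrt (by positivity)
    refine ⟨b', ?_, ?_⟩
    · rw [hb', sum_sq_update, sum_sq_update, Function.update_of_ne hij.symm]
      linarith
    · simp only [hF]
      exact (step_main hp b hij hc hb').2 hne
  -- compactness: maximizer on the sphere
  have hS_closed : IsClosed {b : Fin n → ℝ | ∑ k, b k ^ 2 = r ^ 2} :=
    isClosed_eq (continuous_finset_sum _ fun k _ => (continuous_apply k).pow 2)
      continuous_const
  have hsub : {b : Fin n → ℝ | ∑ k, b k ^ 2 = r ^ 2} ⊆ Metric.closedBall 0 r := by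
    intro b hb
    rw [Metric.mem_closedBall, dist_zero_right]
    rw [pi_norm_le_iff_of_nonneg hr.le]
    intro k
    rw [Real.norm_eq_abs]
    calc |b k| = Real.sqrt (b k ^ 2) := (Real.sqrt_sq_eq_abs _).symm
      _ ≤ Real.sqrt (r ^ 2) := Real.sqrt_le_sqrt (by
          have := Finset.single_le_sum (f := fun k : Fin n => b k ^ 2)
            (fun k _ => sq_nonneg _) (Finset.mem_univ k)
          rw [Set.mem_setOf_eq] at hb
          linarith)
      _ = r := Real.sqrt_sq hr.le
  have hcomp : IsCompact {b : Fin n → ℝ | ∑ k, b k ^ 2 = r ^ 2} :=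
    Metric.isCompact_of_isClosed_isBounded hS_closed
      ((Metric.isBounded_closedBall).subset hsub)
  have hFcont : Continuous F := by
    simp only [hF]
    apply continuous_finset_sum
    intro ε _
    apply Continuous.rpow_const
    · exact (continuous_const.add (continuous_finset_sum _ fun k _ =>
        (continuous_apply k).mul continuous_const)).abs
    · intro _; exact Or.inr hp0.le
  obtain ⟨m, hmS, hmax⟩ := hcomp.exists_isMaxOn ⟨req, hreqmem⟩ hFcont.continuousOn
  rw [Set.mem_setOf_eq] at hmS
  have hmeq : ∀ k, |m k| = r / Real.sqrt n := by
    by_contra hcon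
    push_neg at hcon
    obtain ⟨b', hb'S, hlt⟩ := stepA m hmS hcon
    exact absurd (hmax hb'S) (not_le.mpr hlt)
  have hsigninv : ∀ b : Fin n → ℝ, F b = F (fun k => |b k|) := by
    intro b
    simp only [hF]
    exact sign_invariance b
  have hmreq : F m = F req := by
    rw [hsigninv m]
    congr 1
    funext k
    rw [hmeq k, hreq]
  have hmaxreq : ∀ b : Fin n → ℝ, (∑ k, b k ^ 2 = r ^ 2) → F b ≤ F req := by
    intro b hb
    have := hmax hb
    simpa [hmreq] using this
  have hFa : F a ≤ F req := hmaxreq a ha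
  have hEtrans : ∀ u v : ℝ, 0 ≤ u → u ≤ v →
      ((1 / 2 ^ n : ℝ) * u) ^ (1 / p) ≤ ((1 / 2 ^ n : ℝ) * v) ^ (1 / p) := by
    intro u v hu huv
    apply Real.rpow_le_rpow (by positivity) _ (by positivity)
    apply mul_le_mul_of_nonneg_left huv (by positivity)
  have hEeq_iff : E a = E req ↔ F a = F req := by
    constructor
    · intro h
      rw [hE' a, hE' req] at h
      have h2 := congrArg (fun z : ℝ => z ^ p) h
      have hu : (0:ℝ) ≤ (1 / 2 ^ n : ℝ) * F a :=
        mul_nonneg (by positivity) (hFnonneg a)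
      have hv : (0:ℝ) ≤ (1 / 2 ^ n : ℝ) * F req :=
        mul_nonneg (by positivity) (hFnonneg req)
      rw [← Real.rpow_mul hu, ← Real.rpow_mul hv,
        one_div_mul_cancel (ne_of_gt hp0), Real.rpow_one, Real.rpow_one] at h2
      exact mul_left_cancel₀ (by positivity) h2
    · intro h
      rw [hE' a, hE' req, h]
  constructor
  · rw [hE' a, hE' req]
    exact hEtrans _ _ (hFnonneg a) hFa
  · constructor
    · intro h
      have hFeq : F a = F req := hEeq_iff.mp h
      by_contra hcon
      push_neg at hcon
      obtain ⟨b', hb'S, hlt⟩ := stepA a ha hcon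
      have := hmaxreq b' hb'S
      linarith
    · intro hk
      apply hEeq_iff.mpr
      rw [hsigninv a]
      congr 1
      funext k
      rw [hk k, hreq]
end

section
/- Let p ≥ 1 and ξ ∈ ℝ be fixed, and let g ∈ L¹(0,1) be a nontrivial function (not a.e. zero) with ∫₀¹ g(t) dt = 0. Then the function h(x) = ∫₀¹ |ξ + x·g(t)|^p dt is increasing on (0, ∞). -/
open MeasureTheory

lemma aux_sum_rpow {p a b : ℝ} (hp : 0 ≤ p) (ha : 0 ≤ a) (hb : 0 ≤ b) :
    (a + b) ^ p ≤ 2 ^ p * (a ^ p + b ^ p) := by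
  rcases le_total a b with h | h
  · calc (a + b) ^ p ≤ (2 * b) ^ p := Real.rpow_le_rpow (by linarith) (by linarith) hp
      _ = 2 ^ p * b ^ p := Real.mul_rpow (by norm_num) hb
      _ ≤ 2 ^ p * (a ^ p + b ^ p) := by
          have h1 : b ^ p ≤ a ^ p + b ^ p := le_add_of_nonneg_left (Real.rpow_nonneg ha p)
          exact mul_le_mul_of_nonneg_left h1 (Real.rpow_nonneg (by norm_num) p)
  · calc (a + b) ^ p ≤ (2 * a) ^ p := Real.rpow_le_rpow (by linarith) (by linarith) hp
      _ = 2 ^ p * a ^ p := Real.mul_rpow (by norm_num) ha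
      _ ≤ 2 ^ p * (a ^ p + b ^ p) := by
          have h1 : a ^ p ≤ a ^ p + b ^ p := le_add_of_nonneg_right (Real.rpow_nonneg hb p)
          exact mul_le_mul_of_nonneg_left h1 (Real.rpow_nonneg (by norm_num) p)

/-- For `p ≥ 1`, `ξ ∈ ℝ`, and a nontrivial mean-zero `g ∈ L¹(0,1)`, the function
`h(x) = ∫₀¹ |ξ + x g(t)|^p dt` is increasing on `(0, ∞)`. -/
theorem stmt_5 (p ξ : ℝ) (hp : 1 ≤ p) (g : ℝ → ℝ)
    (hg_int : IntegrableOn g (Set.Ioo 0 1) volume)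
    (hg_ne : ¬ (∀ᵐ t ∂(volume.restrict (Set.Ioo (0 : ℝ) 1)), g t = 0))
    (hg_mean : ∫ t in Set.Ioo (0 : ℝ) 1, g t = 0) :
    MonotoneOn (fun x : ℝ => ∫ t in Set.Ioo (0 : ℝ) 1, |ξ + x * g t| ^ p)
      (Set.Ioi (0 : ℝ)) := by
  have hp0 : (0:ℝ) ≤ p := le_trans zero_le_one hp
  set μ := volume.restrict (Set.Ioo (0:ℝ) 1) with hμ
  have hgint' : Integrable g μ := hg_int
  have hprob : IsProbabilityMeasure μ :=
    ⟨by simp [hμ, Measure.restrict_apply_univ, Real.volume_Ioo]⟩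
  have hφc : Continuous fun u : ℝ => |u| ^ p :=
    continuous_abs.rpow_const fun x => Or.inr hp0
  -- convexity of u ↦ |u| ^ p
  have himage : abs '' Set.univ = Set.Ici (0:ℝ) := by
    ext y; constructor
    · rintro ⟨u, -, rfl⟩; exact abs_nonneg u
    · intro hy; exact ⟨y, Set.mem_univ y, abs_of_nonneg hy⟩
  have habs : ConvexOn ℝ Set.univ (abs : ℝ → ℝ) := by
    refine ⟨convex_univ, fun a _ b _ la lb hla hlb hab => ?_⟩
    simp only [smul_eq_mul]
    calc |la * a + lb * b| ≤ |la * a| + |lb * b| := abs_add_le _ _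
      _ = la * |a| + lb * |b| := by
          rw [abs_mul, abs_mul, abs_of_nonneg hla, abs_of_nonneg hlb]
  have hφ : ConvexOn ℝ Set.univ fun u : ℝ => |u| ^ p := by
    have h1 : ConvexOn ℝ (abs '' Set.univ) fun u : ℝ => u ^ p := by
      rw [himage]; exact convexOn_rpow hp
    have h2 : MonotoneOn (fun u : ℝ => u ^ p) (abs '' Set.univ) := by
      rw [himage]
      intro a ha b _ hab
      exact Real.rpow_le_rpow ha hab hp0
    exact h1.comp habs h2
  have hmeas : ∀ x : ℝ, AEStronglyMeasurable (fun t => |ξ + x * g t| ^ p) μ := fun x =>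
    hφc.comp_aestronglyMeasurable
      (aestronglyMeasurable_const.add (hgint'.aestronglyMeasurable.const_mul x))
  have hlin : ∀ x : ℝ, Integrable (fun t => ξ + x * g t) μ := fun x =>
    (integrable_const ξ).add (hgint'.const_mul x)
  have hintlin : ∀ x : ℝ, ∫ t, (ξ + x * g t) ∂μ = ξ := by
    intro x
    rw [integral_add (integrable_const ξ) (hgint'.const_mul x), integral_const_mul, hg_mean]
    simp [measure_univ]
  -- Jensen's inequality
  have jensen : ∀ x : ℝ, Integrable (fun t => |ξ + x * g t| ^ p) μ →
      |ξ| ^ p ≤ ∫ t, |ξ + x * g t| ^ p ∂μ := by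
    intro x hint
    have h := hφ.map_integral_le hφc.continuousOn isClosed_univ
      (Filter.Eventually.of_forall fun t => Set.mem_univ _) (hlin x) hint
    rwa [hintlin x] at h
  -- integrability transfers upward
  have transfer : ∀ y x : ℝ, 0 < y → y ≤ x →
      Integrable (fun t => |ξ + y * g t| ^ p) μ →
      Integrable (fun t => |ξ + x * g t| ^ p) μ := by
    intro y x hy hyx hint
    have hy' : y ≠ 0 := hy.ne'
    set c := x / y with hc
    have hc1 : 1 ≤ c := (one_le_div hy).mpr hyx
    have hc0 : (0:ℝ) ≤ c := by linarith
    apply Integrable.mono'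
      ((hint.add (integrable_const (|ξ| ^ p))).const_mul (c ^ p * 2 ^ p)) (hmeas x)
    refine Filter.Eventually.of_forall fun t => ?_
    rw [Real.norm_eq_abs, abs_of_nonneg (Real.rpow_nonneg (abs_nonneg _) p)]
    have key : |ξ + x * g t| ≤ c * (|ξ + y * g t| + |ξ|) := by
      have hdec : ξ + x * g t = c * (ξ + y * g t) + (1 - c) * ξ := by
        rw [hc]
        field_simp
        ring
      rw [hdec]
      calc |c * (ξ + y * g t) + (1 - c) * ξ|
          ≤ |c * (ξ + y * g t)| + |(1 - c) * ξ| := abs_add_le _ _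
        _ = c * |ξ + y * g t| + (c - 1) * |ξ| := by
            rw [abs_mul, abs_mul, abs_of_nonneg hc0,
              abs_of_nonpos (by linarith : 1 - c ≤ 0)]
            ring
        _ ≤ c * (|ξ + y * g t| + |ξ|) := by nlinarith [abs_nonneg ξ]
    calc |ξ + x * g t| ^ p ≤ (c * (|ξ + y * g t| + |ξ|)) ^ p :=
          Real.rpow_le_rpow (abs_nonneg _) key hp0
      _ = c ^ p * (|ξ + y * g t| + |ξ|) ^ p := Real.mul_rpow hc0 (by positivity)
      _ ≤ c ^ p * (2 ^ p * (|ξ + y * g t| ^ p + |ξ| ^ p)) :=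
          mul_le_mul_of_nonneg_left
            (aux_sum_rpow hp0 (abs_nonneg _) (abs_nonneg _)) (Real.rpow_nonneg hc0 p)
      _ = c ^ p * 2 ^ p * (|ξ + y * g t| ^ p + |ξ| ^ p) := by ring
  -- main argument
  intro y hy x hx hyx
  simp only
  by_cases hix : Integrable (fun t => |ξ + x * g t| ^ p) μ
  · have hy0 : (0:ℝ) < y := hy
    have hx0 : (0:ℝ) < x := hx
    have hx' : x ≠ 0 := hx0.ne'
    set l := y / x with hl
    have hl0 : (0:ℝ) ≤ l := le_of_lt (div_pos hy0 hx0)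
    have hl1 : l ≤ 1 := (div_le_one hx0).mpr hyx
    have h1l : (0:ℝ) ≤ 1 - l := by linarith
    have key : ∀ t, |ξ + y * g t| ^ p ≤ l * |ξ + x * g t| ^ p + (1 - l) * |ξ| ^ p := by
      intro t
      have hdec : ξ + y * g t = l * (ξ + x * g t) + (1 - l) * ξ := by
        rw [hl]
        field_simp
        ring
      have h := hφ.2 (Set.mem_univ (ξ + x * g t)) (Set.mem_univ ξ) hl0 h1l
        (by ring : l + (1 - l) = 1)
      simpa [smul_eq_mul, ← hdec] using h
    have hmaj : Integrable (fun t => l * |ξ + x * g t| ^ p + (1 - l) * |ξ| ^ p) μ :=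
      (hix.const_mul l).add (integrable_const _)
    have hiy : Integrable (fun t => |ξ + y * g t| ^ p) μ := by
      apply Integrable.mono' hmaj (hmeas y)
      refine Filter.Eventually.of_forall fun t => ?_
      rw [Real.norm_eq_abs, abs_of_nonneg (Real.rpow_nonneg (abs_nonneg _) p)]
      exact key t
    have hj := jensen x hix
    calc ∫ t, |ξ + y * g t| ^ p ∂μ
        ≤ ∫ t, (l * |ξ + x * g t| ^ p + (1 - l) * |ξ| ^ p) ∂μ :=
          integral_mono hiy hmaj key
      _ = l * (∫ t, |ξ + x * g t| ^ p ∂μ) + (1 - l) * |ξ| ^ p := by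
          rw [integral_add (hix.const_mul l) (integrable_const _), integral_const_mul,
            integral_const]
          simp [measure_univ]
      _ ≤ l * (∫ t, |ξ + x * g t| ^ p ∂μ) + (1 - l) * (∫ t, |ξ + x * g t| ^ p ∂μ) :=
          add_le_add_right (mul_le_mul_of_nonneg_left hj h1l) _
      _ = ∫ t, |ξ + x * g t| ^ p ∂μ := by ring
  · have hiy : ¬ Integrable (fun t => |ξ + y * g t| ^ p) μ :=
      fun h => hix (transfer y x hy hyx h)
    rw [integral_undef hix, integral_undef hiy]
end

section
/- For real numbers c and p > 1, the function t(x) = |c + x|^p + |c − x|^p is (strictly) increasing on (0, ∞). -/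
open Set

private lemma key_step {p : ℝ} (hp : 1 < p) {a b d : ℝ} (ha : 0 ≤ a) (hab : a < b)
    (hd : 0 < d) : (a + d) ^ p - a ^ p < (b + d) ^ p - b ^ p := by
  have hcv := strictConvexOn_rpow hp
  have hb : (0:ℝ) ≤ b := ha.trans hab.le
  have h1 : ((a + d) ^ p - a ^ p) / ((a + d) - a) < ((b + d) ^ p - a ^ p) / ((b + d) - a) :=
    hcv.secant_strict_mono (mem_Ici.2 ha) (mem_Ici.2 (by linarith)) (mem_Ici.2 (by linarith))
      (by linarith) (by linarith) (by linarith)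
  have h2 : ((a:ℝ) ^ p - (b + d) ^ p) / (a - (b + d)) < (b ^ p - (b + d) ^ p) / (b - (b + d)) :=
    hcv.secant_strict_mono (mem_Ici.2 (by linarith : (0:ℝ) ≤ b + d)) (mem_Ici.2 ha)
      (mem_Ici.2 hb) (by linarith) (by linarith) hab
  have e2 : ((b + d) ^ p - a ^ p) / ((b + d) - a) < ((b + d) ^ p - b ^ p) / ((b + d) - b) := by
    rw [show ((b + d) ^ p - a ^ p) / ((b + d) - a) = (a ^ p - (b + d) ^ p) / (a - (b + d)) by
        rw [← neg_div_neg_eq]; ring_nf,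
      show ((b + d) ^ p - b ^ p) / ((b + d) - b) = (b ^ p - (b + d) ^ p) / (b - (b + d)) by
        rw [← neg_div_neg_eq]; ring_nf]
    exact h2
  have h3 := h1.trans e2
  rw [add_sub_cancel_left, add_sub_cancel_left, div_lt_div_iff_of_pos_right hd] at h3
  exact h3

private lemma main_step {c p : ℝ} (hp : 1 < p) (hc : 0 ≤ c) {x₁ x₂ : ℝ} (h1 : 0 < x₁)
    (h12 : x₁ < x₂) :
    |c + x₁| ^ p + |c - x₁| ^ p < |c + x₂| ^ p + |c - x₂| ^ p := by
  have hp0 : (0:ℝ) < p := by linarith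
  rw [abs_of_pos (by linarith : (0:ℝ) < c + x₁), abs_of_pos (by linarith : (0:ℝ) < c + x₂)]
  rcases le_or_gt c x₁ with hca | hac
  · -- c ≤ x₁ : both absolute values are x - c
    rw [abs_of_nonpos (by linarith : c - x₁ ≤ 0), abs_of_nonpos (by linarith : c - x₂ ≤ 0)]
    have A : (c + x₁) ^ p < (c + x₂) ^ p :=
      Real.rpow_lt_rpow (by linarith) (by linarith) hp0
    have B : (-(c - x₁)) ^ p ≤ (-(c - x₂)) ^ p :=
      Real.rpow_le_rpow (by linarith) (by linarith) hp0.le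
    linarith
  · rcases le_or_gt x₂ c with hbc | hcb
    · -- x₂ ≤ c
      rw [abs_of_nonneg (by linarith : (0:ℝ) ≤ c - x₁),
        abs_of_nonneg (by linarith : (0:ℝ) ≤ c - x₂)]
      have := key_step hp (by linarith : (0:ℝ) ≤ c - x₂) (by linarith : c - x₂ < c + x₁)
        (by linarith : (0:ℝ) < x₂ - x₁)
      have e1 : c - x₂ + (x₂ - x₁) = c - x₁ := by ring
      have e2 : c + x₁ + (x₂ - x₁) = c + x₂ := by ring
      rw [e1, e2] at this
      linarith
    · -- x₁ < c < x₂ : go through the midpoint c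
      rw [abs_of_nonneg (by linarith : (0:ℝ) ≤ c - x₁),
        abs_of_nonpos (by linarith : c - x₂ ≤ 0)]
      have step1 : (c + x₁) ^ p + (c - x₁) ^ p < (c + c) ^ p := by
        have := key_step hp (le_refl (0:ℝ)) (by linarith : (0:ℝ) < c + x₁)
          (by linarith : (0:ℝ) < c - x₁)
        rw [zero_add, Real.zero_rpow (by linarith : p ≠ 0)] at this
        have e : c + x₁ + (c - x₁) = c + c := by ring
        rw [e] at this
        linarith
      have step2 : (c + c) ^ p ≤ (c + x₂) ^ p :=
        Real.rpow_le_rpow (by linarith) (by linarith) hp0.le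
      have step3 : (0:ℝ) ≤ (-(c - x₂)) ^ p := Real.rpow_nonneg (by linarith) p
      linarith

/-- For `c ∈ ℝ` and `p > 1`, the function `t(x) = |c+x|^p + |c-x|^p` is strictly
increasing on `(0, ∞)`. -/
theorem stmt_6 (c p : ℝ) (hp : 1 < p) :
    StrictMonoOn (fun x : ℝ => |c + x| ^ p + |c - x| ^ p) (Set.Ioi (0 : ℝ)) := by
  intro x₁ hx₁ x₂ _ h12
  simp only [Set.mem_Ioi] at hx₁
  rcases le_or_gt 0 c with hc | hc
  · exact main_step hp hc hx₁ h12
  · have hc' : 0 ≤ -c := by linarith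
    have := main_step hp hc' hx₁ h12 (p := p)
    have e : ∀ x : ℝ, |(-c) + x| ^ p + |(-c) - x| ^ p = |c + x| ^ p + |c - x| ^ p := by
      intro x
      rw [show (-c) + x = -(c - x) by ring, show (-c) - x = -(c + x) by ring, abs_neg, abs_neg]
      ring
    simpa only [e] using this
end

section
/- For any discrete martingale-difference sequence d_1, …, d_n and 0 < λ < 1/2, E[exp(λ (Σ_{k=1}^n d_k)² / ‖𝔖(d)‖_∞²)] ≤ 1/√(1 − 2λ), and the constant 1/√(1 − 2λ) is the best possible (it cannot be improved even restricting to Rademacher martingales). -/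
open MeasureTheory Real Filter


lemma aux_arg (b y : ℝ) : b * y - y ^ 2 / 2 = b ^ 2 / 2 + -(1/2) * (y - b) ^ 2 := by ring

lemma aux_integrable_gauss_shift (b : ℝ) :
    Integrable (fun y : ℝ => Real.exp (b * y - y ^ 2 / 2)) := by
  have h : (fun y : ℝ => Real.exp (b * y - y ^ 2 / 2))
      = fun y => Real.exp (b ^ 2 / 2) * Real.exp (-(1/2) * (y - b) ^ 2) := by
    funext y; rw [← Real.exp_add, ← aux_arg]
  rw [h]
  exact ((integrable_exp_neg_mul_sq (by norm_num : (0:ℝ) < 1/2)).comp_sub_right b).const_mul _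

lemma aux_integral_gauss_shift (b : ℝ) :
    ∫ y : ℝ, Real.exp (b * y - y ^ 2 / 2) = Real.sqrt (2 * π) * Real.exp (b ^ 2 / 2) := by
  have h : ∀ y : ℝ, Real.exp (b * y - y ^ 2 / 2)
      = Real.exp (b ^ 2 / 2) * Real.exp (-(1/2) * (y - b) ^ 2) := by
    intro y; rw [← Real.exp_add, ← aux_arg]
  simp_rw [h]
  rw [MeasureTheory.integral_const_mul]
  have h2 : ∫ y : ℝ, Real.exp (-(1/2) * (y - b) ^ 2)
      = ∫ y : ℝ, Real.exp (-(1/2) * y ^ 2) :=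
    integral_sub_right_eq_self (fun y => Real.exp (-(1/2) * y ^ 2)) b
  rw [h2, integral_gaussian]
  rw [show π / (1/2 : ℝ) = 2 * π by ring]
  ring

lemma aux_exp_sq_eq {lam s b : ℝ} (hl : 0 ≤ lam) (hb : b = Real.sqrt (2 * lam) * s) :
    Real.exp (lam * s ^ 2) =
      (Real.sqrt (2 * π))⁻¹ * ∫ y : ℝ, Real.exp (b * y - y ^ 2 / 2) := by
  rw [aux_integral_gauss_shift, hb]
  have h2 : (Real.sqrt (2 * lam) * s) ^ 2 / 2 = lam * s ^ 2 := by
    rw [mul_pow, Real.sq_sqrt (by linarith)]; ring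
  rw [h2, ← mul_assoc, inv_mul_cancel₀ (by positivity : Real.sqrt (2 * π) ≠ 0), one_mul]

lemma aux_exp_le_cosh {c y : ℝ} (t : ℝ) (hc : 0 < c) (hy : |y| ≤ c) :
    Real.exp (t * y) ≤ Real.cosh (t * c) + y * (Real.sinh (t * c) / c) := by
  have hy1 : -c ≤ y := neg_le_of_abs_le hy
  have hy2 : y ≤ c := le_of_abs_le hy
  have hcne : c ≠ 0 := ne_of_gt hc
  have ha : (0:ℝ) ≤ (c + y) / (2 * c) := div_nonneg (by linarith) (by linarith)
  have hb : (0:ℝ) ≤ (c - y) / (2 * c) := by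
    apply div_nonneg (by linarith) (by linarith)
  have hab : (c + y) / (2 * c) + (c - y) / (2 * c) = 1 := by field_simp; ring
  have key := convexOn_exp.2 (Set.mem_univ (t * c)) (Set.mem_univ (-(t * c))) ha hb hab
  simp only [smul_eq_mul] at key
  have harg : (c + y) / (2 * c) * (t * c) + (c - y) / (2 * c) * (-(t * c)) = t * y := by
    field_simp; ring
  rw [harg] at key
  refine key.trans (le_of_eq ?_)
  simp only [smul_eq_mul, Real.cosh_eq, Real.sinh_eq]
  field_simp
  ring

lemma aux_bdd_integrable {Ω : Type*} [MeasurableSpace Ω] (μ : Measure Ω) [IsFiniteMeasure μ]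
    {f : Ω → ℝ} (hf : Measurable f) {K : ℝ} (h : ∀ x, |f x| ≤ K) : Integrable f μ :=
  Integrable.mono' (integrable_const K) hf.aestronglyMeasurable
    (Filter.Eventually.of_forall fun x => by simpa [Real.norm_eq_abs] using h x)

lemma aux_hoeffding {Ω : Type*} [MeasurableSpace Ω] (μ : Measure Ω) [IsFiniteMeasure μ]
    {A : Set Ω} (hA : MeasurableSet A) {f : Ω → ℝ} (hf : Measurable f)
    {c : ℝ} (hc : 0 ≤ c) (hfc : ∀ x ∈ A, |f x| ≤ c)
    (hint : ∫ x in A, f x ∂μ = 0) (t : ℝ) :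
    ∫ x in A, Real.exp (t * f x) ∂μ ≤ (μ A).toReal * Real.exp (t ^ 2 * c ^ 2 / 2) := by
  rcases eq_or_lt_of_le hc with hc0 | hc0
  · -- c = 0 : f = 0 on A
    have h1 : ∀ x ∈ A, Real.exp (t * f x) = 1 := by
      intro x hx
      have : f x = 0 := abs_eq_zero.1 (le_antisymm (hc0 ▸ hfc x hx) (abs_nonneg _))
      simp [this]
    rw [setIntegral_congr_fun hA h1]
    simp only [integral_const, smul_eq_mul, mul_one, measureReal_restrict_apply_univ, measureReal_def, Measure.restrict_apply_univ]
    exact le_mul_of_one_le_right ENNReal.toReal_nonneg (Real.one_le_exp (by positivity))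
  · -- c > 0
    have hfA : IntegrableOn f A μ := by
      refine Integrable.mono' (integrable_const c) hf.aestronglyMeasurable.restrict ?_
      exact (ae_restrict_iff' hA).2 (Filter.Eventually.of_forall fun x hx => by
        simpa [Real.norm_eq_abs] using hfc x hx)
    have hexpA : IntegrableOn (fun x => Real.exp (t * f x)) A μ := by
      refine Integrable.mono' (integrable_const (Real.exp (|t| * c)))
        (Real.measurable_exp.comp (hf.const_mul t)).aestronglyMeasurable.restrict ?_
      refine (ae_restrict_iff' hA).2 (Filter.Eventually.of_forall fun x hx => ?_)
      rw [Real.norm_eq_abs, abs_of_pos (Real.exp_pos _), Real.exp_le_exp]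
      calc t * f x ≤ |t * f x| := le_abs_self _
        _ = |t| * |f x| := abs_mul t (f x)
        _ ≤ |t| * c := by
            exact mul_le_mul_of_nonneg_left (hfc x hx) (abs_nonneg t)
    have step : ∫ x in A, Real.exp (t * f x) ∂μ
        ≤ ∫ x in A, (Real.cosh (t * c) + f x * (Real.sinh (t * c) / c)) ∂μ := by
      refine setIntegral_mono_on hexpA ?_ hA (fun x hx => aux_exp_le_cosh t hc0 (hfc x hx))
      exact (integrable_const _).add (hfA.mul_const _)
    refine step.trans ?_
    rw [integral_add (integrable_const _) (hfA.mul_const _), integral_const,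
      integral_mul_const, hint, zero_mul, add_zero, smul_eq_mul,
      measureReal_restrict_apply_univ, measureReal_def]
    refine mul_le_mul_of_nonneg_left ?_ ENNReal.toReal_nonneg
    calc Real.cosh (t * c) ≤ Real.exp ((t * c) ^ 2 / 2) := Real.cosh_le_exp_half_sq _
      _ = Real.exp (t ^ 2 * c ^ 2 / 2) := by ring_nf

lemma aux_one_add_half_sq_le_cosh (u : ℝ) : 1 + u ^ 2 / 2 ≤ Real.cosh u := by
  have h1 : Real.cosh u = 2 * Real.sinh (u / 2) ^ 2 + 1 := by
    have h := Real.cosh_two_mul (u / 2)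
    rw [show 2 * (u / 2) = u by ring, Real.cosh_sq] at h
    linarith
  have h2 : (u / 2) ^ 2 ≤ Real.sinh (u / 2) ^ 2 := by
    have key : ∀ z : ℝ, 0 ≤ z → z ^ 2 ≤ Real.sinh z ^ 2 := by
      intro z hz
      rcases eq_or_lt_of_le hz with h | h
      · simp [← h]
      · have := (Real.self_lt_sinh_iff.2 h).le
        exact pow_le_pow_left₀ hz this 2
    rcases le_or_gt 0 (u / 2) with h | h
    · exact key _ h
    · have h3 := key (-(u / 2)) (by linarith)
      rwa [Real.sinh_neg, neg_sq, neg_sq] at h3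
  nlinarith [h2]

lemma aux_integrable_final {lam : ℝ} (h1 : lam < 1 / 2) :
    Integrable (fun y : ℝ => Real.exp ((lam - 1 / 2) * y ^ 2)) := by
  have h : (fun y : ℝ => Real.exp ((lam - 1 / 2) * y ^ 2))
      = fun y => Real.exp (-(1 / 2 - lam) * y ^ 2) := by
    funext y; ring_nf
  rw [h]
  exact integrable_exp_neg_mul_sq (by linarith)

lemma aux_final {lam : ℝ} (h1 : lam < 1 / 2) :
    (Real.sqrt (2 * π))⁻¹ * ∫ y : ℝ, Real.exp ((lam - 1 / 2) * y ^ 2)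
      = 1 / Real.sqrt (1 - 2 * lam) := by
  have h : (fun y : ℝ => Real.exp ((lam - 1 / 2) * y ^ 2))
      = fun y => Real.exp (-(1 / 2 - lam) * y ^ 2) := by
    funext y; ring_nf
  rw [h, integral_gaussian]
  have h2 : π / (1 / 2 - lam) = 2 * π / (1 - 2 * lam) := by
    rw [div_eq_div_iff (by linarith) (by linarith)]; ring
  rw [h2, Real.sqrt_div (by positivity : (0:ℝ) ≤ 2 * π) (1 - 2 * lam)]
  rw [inv_mul_eq_div, div_right_comm, div_self (by positivity : Real.sqrt (2 * π) ≠ 0)]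

lemma aux_pow_le_exp {z : ℝ} (hz : 0 ≤ z) (n : ℕ) : (1 + z / n) ^ n ≤ Real.exp z := by
  rcases Nat.eq_zero_or_pos n with h | h
  · simp [h, Real.one_le_exp hz]
  · have hn : (n : ℝ) ≠ 0 := Nat.cast_ne_zero.2 h.ne'
    calc (1 + z / n) ^ n ≤ Real.exp (z / n) ^ n := by
          refine pow_le_pow_left₀ (by positivity) ?_ n
          have := Real.add_one_le_exp (z / n)
          linarith
      _ = Real.exp (n * (z / n)) := (Real.exp_nat_mul _ n).symm
      _ = Real.exp z := by rw [mul_div_cancel₀ _ hn]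

lemma aux_sharp {lam : ℝ} (h0 : 0 < lam) (h1 : lam < 1 / 2) (c : ℝ)
    (hc : c < 1 / Real.sqrt (1 - 2 * lam)) :
    ∃ m : ℕ, 0 < m ∧
      c < (1 / 2 ^ m : ℝ) *
        ∑ ε : Fin m → Bool,
          Real.exp (lam * ((∑ j, (if ε j then (1 : ℝ) else -1)) / Real.sqrt m) ^ 2) := by
  classical
  set χ : Bool → ℝ := fun b => if b then (1 : ℝ) else -1 with hχ
  set a : ℕ → ℝ := fun m => Real.sqrt (2 * lam) / Real.sqrt m with ha
  set F : ℕ → ℝ → ℝ := fun m y => (1 + lam * y ^ 2 / m) ^ m * Real.exp (-(y ^ 2) / 2) with hF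
  set G : ℕ → ℝ → ℝ := fun m y => Real.cosh (a m * y) ^ m * Real.exp (-(y ^ 2) / 2) with hG
  have hasq : ∀ m : ℕ, 0 < m → ∀ y : ℝ, (a m * y) ^ 2 = 2 * lam / m * y ^ 2 := by
    intro m hm y
    have hmpos : (0:ℝ) < m := Nat.cast_pos.2 hm
    rw [mul_pow, ha]
    rw [div_pow, Real.sq_sqrt (by linarith), Real.sq_sqrt hmpos.le]
  have hGle : ∀ m : ℕ, 0 < m → ∀ y : ℝ, G m y ≤ Real.exp ((lam - 1 / 2) * y ^ 2) := by
    intro m hm y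
    have hmpos : (0:ℝ) < m := Nat.cast_pos.2 hm
    have h2 : Real.cosh (a m * y) ^ m ≤ Real.exp (lam * y ^ 2) := by
      calc Real.cosh (a m * y) ^ m ≤ Real.exp ((a m * y) ^ 2 / 2) ^ m :=
            pow_le_pow_left₀ (Real.cosh_pos _).le (Real.cosh_le_exp_half_sq _) m
        _ = Real.exp (m * ((a m * y) ^ 2 / 2)) := (Real.exp_nat_mul _ m).symm
        _ = Real.exp (lam * y ^ 2) := by
            rw [hasq m hm y]; congr 1; field_simp
    calc G m y ≤ Real.exp (lam * y ^ 2) * Real.exp (-(y ^ 2) / 2) :=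
          mul_le_mul_of_nonneg_right h2 (Real.exp_pos _).le
      _ = Real.exp ((lam - 1 / 2) * y ^ 2) := by rw [← Real.exp_add]; ring_nf
  have hFG : ∀ m : ℕ, 0 < m → ∀ y : ℝ, F m y ≤ G m y := by
    intro m hm y
    have hmpos : (0:ℝ) < m := Nat.cast_pos.2 hm
    refine mul_le_mul_of_nonneg_right (pow_le_pow_left₀ (by positivity) ?_ m) (Real.exp_pos _).le
    have h3 := aux_one_add_half_sq_le_cosh (a m * y)
    rw [hasq m hm y] at h3
    calc 1 + lam * y ^ 2 / m = 1 + 2 * lam / m * y ^ 2 / 2 := by ring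
      _ ≤ Real.cosh (a m * y) := h3
  have hFpos : ∀ m : ℕ, ∀ y : ℝ, 0 ≤ F m y := by
    intro m y
    have hm0 : (0:ℝ) ≤ 1 + lam * y ^ 2 / m := by positivity
    rw [hF]
    positivity
  have hFle : ∀ m : ℕ, ∀ y : ℝ, F m y ≤ Real.exp ((lam - 1 / 2) * y ^ 2) := by
    intro m y
    calc F m y ≤ Real.exp (lam * y ^ 2) * Real.exp (-(y ^ 2) / 2) := by
          refine mul_le_mul_of_nonneg_right ?_ (Real.exp_pos _).le
          exact aux_pow_le_exp (by positivity) m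
      _ = Real.exp ((lam - 1 / 2) * y ^ 2) := by rw [← Real.exp_add]; ring_nf
  have hexpmeas : Measurable fun y : ℝ => Real.exp (-(y ^ 2) / 2) :=
    Real.measurable_exp.comp (((measurable_id.pow_const 2).neg).div_const 2)
  have hFmeas : ∀ m : ℕ, AEStronglyMeasurable (F m) (volume : Measure ℝ) := by
    intro m
    refine Measurable.aestronglyMeasurable ?_
    exact ((((measurable_id.pow_const 2).const_mul lam).div_const _ |>.const_add 1).pow_const
      m).mul hexpmeas
  have hGmeas : ∀ m : ℕ, AEStronglyMeasurable (G m) (volume : Measure ℝ) := by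
    intro m
    refine Measurable.aestronglyMeasurable ?_
    exact ((Real.continuous_cosh.measurable.comp (measurable_id.const_mul (a m))).pow_const
      m).mul hexpmeas
  have hFint : ∀ m : ℕ, Integrable (F m) := by
    intro m
    refine Integrable.mono' (aux_integrable_final h1) (hFmeas m)
      (Filter.Eventually.of_forall fun y => ?_)
    rw [Real.norm_eq_abs, abs_of_nonneg (hFpos m y)]
    exact hFle m y
  have hGint : ∀ m : ℕ, 0 < m → Integrable (G m) := by
    intro m hm
    refine Integrable.mono' (aux_integrable_final h1) (hGmeas m)
      (Filter.Eventually.of_forall fun y => ?_)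
    have : (0:ℝ) ≤ G m y := by
      rw [hG]; positivity
    rw [Real.norm_eq_abs, abs_of_nonneg this]
    exact hGle m hm y
  have hkey : ∀ m : ℕ, 0 < m →
      (1 / 2 ^ m : ℝ) * ∑ ε : Fin m → Bool,
          Real.exp (lam * ((∑ j, χ (ε j)) / Real.sqrt m) ^ 2)
        = (Real.sqrt (2 * π))⁻¹ * ∫ y : ℝ, G m y := by
    intro m hm
    have step1 : ∀ ε : Fin m → Bool,
        Real.exp (lam * ((∑ j, χ (ε j)) / Real.sqrt m) ^ 2)
          = (Real.sqrt (2 * π))⁻¹ *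
            ∫ y : ℝ, Real.exp ((a m * ∑ j, χ (ε j)) * y - y ^ 2 / 2) := by
      intro ε
      exact aux_exp_sq_eq h0.le (by rw [ha]; ring)
    rw [Finset.sum_congr rfl fun ε _ => step1 ε, ← Finset.mul_sum,
      ← integral_finset_sum _ fun ε _ => aux_integrable_gauss_shift _]
    have step2 : ∀ y : ℝ,
        (∑ ε : Fin m → Bool, Real.exp ((a m * ∑ j, χ (ε j)) * y - y ^ 2 / 2))
          = 2 ^ m * G m y := by
      intro y
      have e1 : ∀ ε : Fin m → Bool,
          Real.exp ((a m * ∑ j, χ (ε j)) * y - y ^ 2 / 2)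
            = (∏ j, Real.exp (a m * y * χ (ε j))) * Real.exp (-(y ^ 2) / 2) := by
        intro ε
        rw [← Real.exp_sum, ← Real.exp_add]
        congr 1
        rw [← Finset.mul_sum]
        ring
      rw [Finset.sum_congr rfl fun ε _ => e1 ε, ← Finset.sum_mul]
      have e2 : (∑ ε : Fin m → Bool, ∏ j, Real.exp (a m * y * χ (ε j)))
          = (2 * Real.cosh (a m * y)) ^ m := by
        rw [show (∑ ε : Fin m → Bool, ∏ j, Real.exp (a m * y * χ (ε j)))
            = ∏ j : Fin m, ∑ b : Bool, Real.exp (a m * y * χ b) from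
          (Fintype.prod_sum fun (j : Fin m) (b : Bool) => Real.exp (a m * y * χ b)).symm]
        have hb : ∀ j : Fin m, (∑ b : Bool, Real.exp (a m * y * χ b))
            = 2 * Real.cosh (a m * y) := by
          intro j
          rw [Fintype.sum_bool]
          simp only [hχ, if_true, Bool.false_eq_true, if_false, mul_one, mul_neg_one,
            Real.cosh_eq]
          ring
        rw [Finset.prod_congr rfl fun j _ => hb j, Finset.prod_const, Finset.card_univ,
          Fintype.card_fin]
      rw [e2, mul_pow, hG]
      ring
    rw [integral_congr_ae (Filter.Eventually.of_forall step2)]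
    rw [MeasureTheory.integral_const_mul]
    have h2m : (2:ℝ) ^ m ≠ 0 := by positivity
    field_simp
  have hmono2 : ∀ m : ℕ, 0 < m →
      (Real.sqrt (2 * π))⁻¹ * ∫ y : ℝ, F m y ≤ (Real.sqrt (2 * π))⁻¹ * ∫ y : ℝ, G m y := by
    intro m hm
    exact mul_le_mul_of_nonneg_left (integral_mono (hFint m) (hGint m hm) (hFG m hm))
      (by positivity)
  have hlim : Tendsto (fun m : ℕ => (Real.sqrt (2 * π))⁻¹ * ∫ y : ℝ, F m y) atTop
      (nhds (1 / Real.sqrt (1 - 2 * lam))) := by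
    rw [← aux_final h1]
    refine Filter.Tendsto.const_mul _ ?_
    refine tendsto_integral_of_dominated_convergence
      (fun y => Real.exp ((lam - 1 / 2) * y ^ 2)) hFmeas (aux_integrable_final h1) ?_ ?_
    · intro m
      refine Filter.Eventually.of_forall fun y => ?_
      rw [Real.norm_eq_abs, abs_of_nonneg (hFpos m y)]
      exact hFle m y
    · refine Filter.Eventually.of_forall fun y => ?_
      have heq : Real.exp ((lam - 1 / 2) * y ^ 2)
          = Real.exp (lam * y ^ 2) * Real.exp (-(y ^ 2) / 2) := by
        rw [← Real.exp_add]; ring_nf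
      rw [heq]
      exact (Real.tendsto_one_add_div_pow_exp (lam * y ^ 2)).mul_const _
  obtain ⟨m, hm1, hm2⟩ := ((hlim.eventually (eventually_gt_nhds hc)).and
    (eventually_ge_atTop 1)).exists
  refine ⟨m, hm2, ?_⟩
  rw [hkey m hm2]
  exact hm1.trans_le (hmono2 m hm2)

/-- Sharp sub-Gaussian bound for discrete martingale differences: if a.e. the
Chang–Wilson–Wolff square function is at most `M`, then for `0 < λ < 1/2`,
`E[exp(λ (Σ d_k)² / M²)] ≤ 1/√(1-2λ)`, and the constant `1/√(1-2λ)` is best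
possible even among Rademacher martingales. -/
theorem stmt_16
    {Ω : Type*} [MeasurableSpace Ω] (μ : Measure Ω) [IsProbabilityMeasure μ]
    (n : ℕ) (hn : 0 < n) (lam : ℝ) (h0 : 0 < lam) (h1 : lam < 1 / 2)
    (part : ℕ → ℕ → Set Ω)
    (hpart_meas : ∀ k i, MeasurableSet (part k i))
    (hpart_disj : ∀ k, Pairwise fun i j => Disjoint (part k i) (part k j))
    (hpart_cover : ∀ k, (⋃ i, part k i) = Set.univ)
    (hpart_zero : part 0 0 = Set.univ)
    (hpart_refine : ∀ k i, ∃ j, part (k + 1) i ⊆ part k j)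
    (d : Fin n → Ω → ℝ)
    (hd_meas : ∀ k, Measurable (d k))
    (hd_bdd : ∀ k, ∃ C : ℝ, ∀ x, |d k x| ≤ C)
    (hd_adapted : ∀ (k : Fin n) (i : ℕ), ∀ x ∈ part (k.1 + 1) i, ∀ y ∈ part (k.1 + 1) i,
      d k x = d k y)
    (hd_mart : ∀ (k : Fin n) (i : ℕ), ∫ x in part k.1 i, d k x ∂μ = 0)
    (M : ℝ) (hM : 0 < M)
    (hSq : ∀ᵐ x ∂μ, ∀ i : ℕ → ℕ, (∀ k : Fin n, x ∈ part k.1 (i k.1)) →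
      ∑ k : Fin n, (sSup ((fun y => |d k y|) '' part k.1 (i k.1))) ^ 2 ≤ M ^ 2) :
    (∫ x, Real.exp (lam * (∑ k, d k x) ^ 2 / M ^ 2) ∂μ ≤ 1 / Real.sqrt (1 - 2 * lam)) ∧
      ∀ c : ℝ, c < 1 / Real.sqrt (1 - 2 * lam) →
        ∃ m : ℕ, 0 < m ∧
          c < (1 / 2 ^ m : ℝ) *
            ∑ ε : Fin m → Bool,
              Real.exp (lam * ((∑ j, (if ε j then (1 : ℝ) else -1)) / Real.sqrt m) ^ 2) := by
  classical
  refine ⟨?_, fun c hc => aux_sharp h0 h1 c hc⟩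
  -- ## Setup
  have hΩ : Nonempty Ω := by
    by_contra h
    rw [not_nonempty_iff] at h
    have h1' := measure_univ (μ := μ)
    rw [Set.univ_eq_empty_iff.2 h, measure_empty] at h1'
    exact zero_ne_one h1'
  choose C hC using hd_bdd
  have hC0 : ∀ k, 0 ≤ C k := fun k =>
    (abs_nonneg _).trans (hC k (Classical.arbitrary Ω))
  -- the index of the atom of the k-th partition containing x
  have hmem : ∀ (k : ℕ) (x : Ω), ∃ i, x ∈ part k i := fun k x =>
    Set.mem_iUnion.1 (by rw [hpart_cover k]; trivial)
  set idx : ℕ → Ω → ℕ := fun k x => (hmem k x).choose with hidx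
  have hidx_mem : ∀ k x, x ∈ part k (idx k x) := fun k x => (hmem k x).choose_spec
  have hidx_eq : ∀ k x i, x ∈ part k i → idx k x = i := by
    intro k x i hx
    by_contra hne
    exact Set.disjoint_left.1 (hpart_disj k hne) (hidx_mem k x) hx
  have hidx_meas : ∀ k, Measurable (idx k) := by
    intro k
    refine measurable_to_countable' fun i => ?_
    have : idx k ⁻¹' {i} = part k i := by
      ext x
      simp only [Set.mem_preimage, Set.mem_singleton_iff]
      exact ⟨fun hx => hx ▸ hidx_mem k x, fun hx => hidx_eq k x i hx⟩
    rw [this]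
    exact hpart_meas k i
  -- sup of |d k| over atoms
  set cc : Fin n → ℕ → ℝ := fun k i => sSup ((fun y => |d k y|) '' part k.1 i) with hccdef
  have hbddA : ∀ (k : Fin n) (i : ℕ), BddAbove ((fun y => |d k y|) '' part k.1 i) := by
    intro k i
    exact ⟨C k, by rintro _ ⟨y, -, rfl⟩; exact hC k y⟩
  have hcc_le : ∀ (k : Fin n) (i : ℕ), ∀ x ∈ part k.1 i, |d k x| ≤ cc k i := by
    intro k i x hx
    exact le_csSup (hbddA k i) ⟨x, hx, rfl⟩
  have hcc_nonneg : ∀ (k : Fin n) (i : ℕ), 0 ≤ cc k i := by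
    intro k i
    rcases Set.eq_empty_or_nonempty (part k.1 i) with h | ⟨x, hx⟩
    · simp only [hccdef, h, Set.image_empty]
      exact le_of_eq Real.sSup_empty.symm
    · exact (abs_nonneg (d k x)).trans (hcc_le k i x hx)
  have hcc_le_C : ∀ (k : Fin n) (i : ℕ), cc k i ≤ C k := by
    intro k i
    rcases Set.eq_empty_or_nonempty (part k.1 i) with h | ⟨x, hx⟩
    · simp only [hccdef, h, Set.image_empty]
      rw [Real.sSup_empty]
      exact hC0 k
    · refine csSup_le ⟨_, ⟨x, hx, rfl⟩⟩ ?_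
      rintro _ ⟨y, -, rfl⟩
      exact hC k y
  have hDsum : ∀ᵐ x ∂μ, ∑ k : Fin n, cc k (idx k.1 x) ^ 2 ≤ M ^ 2 :=
    hSq.mono fun x h => h (fun j => idx j x) fun k => hidx_mem k.1 x
  -- refinement
  have hrefine : ∀ m j : ℕ, m ≤ j → ∀ i, ∃ i', part j i ⊆ part m i' := by
    intro m j hmj
    induction j, hmj using Nat.le_induction with
    | base => exact fun i => ⟨i, subset_rfl⟩
    | succ j hmj ih =>
      intro i
      obtain ⟨i'', h1'⟩ := hpart_refine j i
      obtain ⟨i', h2'⟩ := ih i''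
      exact ⟨i', h1'.trans h2'⟩
  have hd_const : ∀ (k : Fin n) (j i : ℕ), k.1 < j →
      ∀ x ∈ part j i, ∀ y ∈ part j i, d k x = d k y := by
    intro k j i hkj x hx y hy
    obtain ⟨i', hsub⟩ := hrefine (k.1 + 1) j hkj i
    exact hd_adapted k i' x (hsub hx) y (hsub hy)
  have hidx_const : ∀ (m j i : ℕ), m ≤ j → ∀ x ∈ part j i, ∀ y ∈ part j i,
      idx m x = idx m y := by
    intro m j i hmj x hx y hy
    obtain ⟨i', hsub⟩ := hrefine m j hmj i
    rw [hidx_eq m x i' (hsub hx), hidx_eq m y i' (hsub hy)]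
  -- partial sums and quadratic variation bound
  set S : ℕ → Ω → ℝ := fun j x => ∑ k : Fin n, if k.1 < j then d k x else 0 with hSdef
  set V : ℕ → Ω → ℝ := fun j x => ∑ k : Fin n, if k.1 < j then cc k (idx k.1 x) ^ 2 else 0
    with hVdef
  have hSmeas : ∀ j, Measurable (S j) := by
    intro j
    refine Finset.measurable_sum _ fun k _ => ?_
    by_cases hk : k.1 < j
    · simpa only [if_pos hk] using hd_meas k
    · simpa only [if_neg hk] using measurable_const
  have hVmeas : ∀ j, Measurable (V j) := by
    intro j
    refine Finset.measurable_sum _ fun k _ => ?_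
    by_cases hk : k.1 < j
    · simp only [if_pos hk]
      have : Measurable fun x => cc k (idx k.1 x) :=
        (measurable_from_top (f := cc k)).comp (hidx_meas k.1)
      exact this.pow_const 2
    · simpa only [if_neg hk] using measurable_const
  have hSbd : ∀ j x, |S j x| ≤ ∑ k : Fin n, C k := by
    intro j x
    refine (Finset.abs_sum_le_sum_abs _ _).trans (Finset.sum_le_sum fun k _ => ?_)
    by_cases hk : k.1 < j
    · rw [if_pos hk]; exact hC k x
    · rw [if_neg hk, abs_zero]; exact hC0 k
  have hVnonneg : ∀ j x, 0 ≤ V j x := by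
    intro j x
    refine Finset.sum_nonneg fun k _ => ?_
    by_cases hk : k.1 < j
    · rw [if_pos hk]; positivity
    · rw [if_neg hk]
  have hVbd : ∀ j x, V j x ≤ ∑ k : Fin n, C k ^ 2 := by
    intro j x
    refine Finset.sum_le_sum fun k _ => ?_
    by_cases hk : k.1 < j
    · rw [if_pos hk]
      exact pow_le_pow_left₀ (hcc_nonneg k _) (hcc_le_C k _) 2
    · rw [if_neg hk]; positivity
  -- integrability of the exponential supermartingale
  have hGint : ∀ (t : ℝ) (j : ℕ),
      Integrable (fun x => Real.exp (t * S j x - t ^ 2 / 2 * V j x)) μ := by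
    intro t j
    refine aux_bdd_integrable μ ?_ (K := Real.exp (|t| * ∑ k : Fin n, C k)) ?_
    · exact Real.measurable_exp.comp
        (((hSmeas j).const_mul t).sub ((hVmeas j).const_mul (t ^ 2 / 2)))
    · intro x
      rw [abs_of_pos (Real.exp_pos _), Real.exp_le_exp]
      have h1' : t * S j x ≤ |t| * ∑ k : Fin n, C k := by
        calc t * S j x ≤ |t * S j x| := le_abs_self _
          _ = |t| * |S j x| := abs_mul _ _
          _ ≤ |t| * ∑ k : Fin n, C k := mul_le_mul_of_nonneg_left (hSbd j x) (abs_nonneg t)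
      have h2' : 0 ≤ t ^ 2 / 2 * V j x :=
        mul_nonneg (by positivity) (hVnonneg j x)
      linarith
  -- the Azuma supermartingale bound
  have azuma : ∀ (t : ℝ) (j : ℕ), ∫ x, Real.exp (t * S j x - t ^ 2 / 2 * V j x) ∂μ ≤ 1 := by
    intro t j
    induction j with
    | zero =>
      have e : (fun x => Real.exp (t * S 0 x - t ^ 2 / 2 * V 0 x)) = fun _ => (1 : ℝ) := by
        funext x
        simp [hSdef, hVdef]
      rw [e, integral_const, measureReal_def, measure_univ]
      simp
    | succ j ih =>
      by_cases hj : j < n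
      · set kk : Fin n := ⟨j, hj⟩ with hkk
        have hsplitS : ∀ x, S (j + 1) x = S j x + d kk x := by
          intro x
          simp only [hSdef]
          have e : ∀ k' : Fin n, (if k'.1 < j + 1 then d k' x else 0)
              = (if k'.1 < j then d k' x else 0) + (if k' = kk then d k' x else 0) := by
            intro k'
            by_cases h1' : k' = kk
            · subst h1'
              simp [hkk]
            · have h2' : k'.1 ≠ j := fun h => h1' (Fin.ext h)
              by_cases h3' : k'.1 < j
              · simp [h3', Nat.lt_succ_of_lt h3', h1']
              · have h4' : ¬ k'.1 < j + 1 := by omega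
                simp [h3', h4', h1']
          rw [Finset.sum_congr rfl fun k' _ => e k', Finset.sum_add_distrib]
          congr 1
          simp [Finset.sum_ite_eq']
        have hsplitV : ∀ x, V (j + 1) x = V j x + cc kk (idx j x) ^ 2 := by
          intro x
          simp only [hVdef]
          have e : ∀ k' : Fin n, (if k'.1 < j + 1 then cc k' (idx k'.1 x) ^ 2 else 0)
              = (if k'.1 < j then cc k' (idx k'.1 x) ^ 2 else 0)
                + (if k' = kk then cc k' (idx k'.1 x) ^ 2 else 0) := by
            intro k'
            by_cases h1' : k' = kk
            · subst h1'
              simp [hkk]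
            · have h2' : k'.1 ≠ j := fun h => h1' (Fin.ext h)
              by_cases h3' : k'.1 < j
              · simp [h3', Nat.lt_succ_of_lt h3', h1']
              · have h4' : ¬ k'.1 < j + 1 := by omega
                simp [h3', h4', h1']
          rw [Finset.sum_congr rfl fun k' _ => e k', Finset.sum_add_distrib]
          congr 1
          simp [Finset.sum_ite_eq']
          rfl
        have key : ∀ i : ℕ,
            (∫ x in part j i, Real.exp (t * S (j + 1) x - t ^ 2 / 2 * V (j + 1) x) ∂μ)
              ≤ ∫ x in part j i, Real.exp (t * S j x - t ^ 2 / 2 * V j x) ∂μ := by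
          intro i
          rcases Set.eq_empty_or_nonempty (part j i) with hA | ⟨x₀, hx₀⟩
          · rw [hA]
            simp
          · have hSconst : ∀ x ∈ part j i, S j x = S j x₀ := by
              intro x hx
              simp only [hSdef]
              refine Finset.sum_congr rfl fun k' _ => ?_
              by_cases h' : k'.1 < j
              · rw [if_pos h', if_pos h']
                exact hd_const k' j i h' x hx x₀ hx₀
              · rw [if_neg h', if_neg h']
            have hVconst : ∀ x ∈ part j i, V j x = V j x₀ := by
              intro x hx
              simp only [hVdef]
              refine Finset.sum_congr rfl fun k' _ => ?_
              by_cases h' : k'.1 < j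
              · rw [if_pos h', if_pos h', hidx_const k'.1 j i h'.le x hx x₀ hx₀]
              · rw [if_neg h', if_neg h']
            have hidxA : ∀ x ∈ part j i, idx j x = i := fun x hx => hidx_eq j x i hx
            set K : ℝ := Real.exp (t * S j x₀ - t ^ 2 / 2 * V j x₀ - t ^ 2 / 2 * cc kk i ^ 2)
              with hKdef
            have hG1 : Set.EqOn
                (fun x => Real.exp (t * S (j + 1) x - t ^ 2 / 2 * V (j + 1) x))
                (fun x => K * Real.exp (t * d kk x)) (part j i) := by
              intro x hx
              simp only
              rw [hsplitS x, hsplitV x, hSconst x hx, hVconst x hx, hidxA x hx, hKdef,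
                ← Real.exp_add]
              congr 1
              ring
            rw [setIntegral_congr_fun (hpart_meas j i) hG1, MeasureTheory.integral_const_mul]
            have hhoef := aux_hoeffding μ (hpart_meas j i) (hd_meas kk) (hcc_nonneg kk i)
              (fun x hx => hcc_le kk i x hx) (hd_mart kk i) t
            have hG0 : Set.EqOn
                (fun x => Real.exp (t * S j x - t ^ 2 / 2 * V j x))
                (fun _ => Real.exp (t * S j x₀ - t ^ 2 / 2 * V j x₀)) (part j i) := by
              intro x hx
              simp only
              rw [hSconst x hx, hVconst x hx]
            calc K * ∫ x in part j i, Real.exp (t * d kk x) ∂μ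
                ≤ K * ((μ (part j i)).toReal * Real.exp (t ^ 2 * cc kk i ^ 2 / 2)) :=
                  mul_le_mul_of_nonneg_left hhoef (Real.exp_pos _).le
              _ = (μ (part j i)).toReal * (K * Real.exp (t ^ 2 * cc kk i ^ 2 / 2)) := by ring
              _ = (μ (part j i)).toReal * Real.exp (t * S j x₀ - t ^ 2 / 2 * V j x₀) := by
                  rw [hKdef, ← Real.exp_add]
                  congr 2
                  ring
              _ = ∫ x in part j i, Real.exp (t * S j x - t ^ 2 / 2 * V j x) ∂μ := by
                  rw [setIntegral_congr_fun (hpart_meas j i) hG0, setIntegral_const,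
                    smul_eq_mul, measureReal_def]
        have hs1 := hasSum_integral_iUnion (μ := μ) (fun i => hpart_meas j i) (hpart_disj j)
          (by rw [hpart_cover j]; exact (hGint t (j + 1)).integrableOn)
        have hs0 := hasSum_integral_iUnion (μ := μ) (fun i => hpart_meas j i) (hpart_disj j)
          (by rw [hpart_cover j]; exact (hGint t j).integrableOn)
        have e1 : ∫ x in ⋃ i, part j i, Real.exp (t * S (j + 1) x - t ^ 2 / 2 * V (j + 1) x) ∂μ
            = ∫ x, Real.exp (t * S (j + 1) x - t ^ 2 / 2 * V (j + 1) x) ∂μ := by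
          rw [hpart_cover j, setIntegral_univ]
        have e0 : ∫ x in ⋃ i, part j i, Real.exp (t * S j x - t ^ 2 / 2 * V j x) ∂μ
            = ∫ x, Real.exp (t * S j x - t ^ 2 / 2 * V j x) ∂μ := by
          rw [hpart_cover j, setIntegral_univ]
        calc ∫ x, Real.exp (t * S (j + 1) x - t ^ 2 / 2 * V (j + 1) x) ∂μ
            = ∑' i, ∫ x in part j i, Real.exp (t * S (j + 1) x - t ^ 2 / 2 * V (j + 1) x) ∂μ := by
              rw [← e1, hs1.tsum_eq]
          _ ≤ ∑' i, ∫ x in part j i, Real.exp (t * S j x - t ^ 2 / 2 * V j x) ∂μ :=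
              Summable.tsum_le_tsum key hs1.summable hs0.summable
          _ = ∫ x, Real.exp (t * S j x - t ^ 2 / 2 * V j x) ∂μ := by rw [hs0.tsum_eq, e0]
          _ ≤ 1 := ih
      · have e : (fun x => Real.exp (t * S (j + 1) x - t ^ 2 / 2 * V (j + 1) x))
            = fun x => Real.exp (t * S j x - t ^ 2 / 2 * V j x) := by
          funext x
          have e1 : S (j + 1) x = S j x := by
            simp only [hSdef]
            refine Finset.sum_congr rfl fun k _ => ?_
            have hk : k.1 < j := lt_of_lt_of_le k.2 (not_lt.1 hj)
            rw [if_pos hk, if_pos (Nat.lt_succ_of_lt hk)]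
          have e2 : V (j + 1) x = V j x := by
            simp only [hVdef]
            refine Finset.sum_congr rfl fun k _ => ?_
            have hk : k.1 < j := lt_of_lt_of_le k.2 (not_lt.1 hj)
            rw [if_pos hk, if_pos (Nat.lt_succ_of_lt hk)]
          rw [e1, e2]
        rw [e]
        exact ih
  -- from Azuma to the mgf bound
  set B : ℝ := ∑ k : Fin n, C k with hBdef
  have hSn : ∀ x, S n x = ∑ k : Fin n, d k x := by
    intro x
    simp only [hSdef]
    exact Finset.sum_congr rfl fun k _ => if_pos k.2
  have mgf : ∀ t : ℝ, ∫ x, Real.exp (t * S n x) ∂μ ≤ Real.exp (t ^ 2 * M ^ 2 / 2) := by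
    intro t
    have hVM : ∀ᵐ x ∂μ, V n x ≤ M ^ 2 := by
      refine hDsum.mono fun x h => ?_
      have e : V n x = ∑ k : Fin n, cc k (idx k.1 x) ^ 2 := by
        simp only [hVdef]
        exact Finset.sum_congr rfl fun k _ => if_pos k.2
      rw [e]
      exact h
    have hae : ∀ᵐ x ∂μ, Real.exp (t * S n x)
        ≤ Real.exp (t ^ 2 * M ^ 2 / 2) * Real.exp (t * S n x - t ^ 2 / 2 * V n x) := by
      refine hVM.mono fun x hx => ?_
      rw [← Real.exp_add, Real.exp_le_exp]
      have h2' : t ^ 2 / 2 * V n x ≤ t ^ 2 / 2 * M ^ 2 :=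
        mul_le_mul_of_nonneg_left hx (by positivity)
      nlinarith [h2']
    have hint1 : Integrable (fun x => Real.exp (t * S n x)) μ := by
      refine aux_bdd_integrable μ (Real.measurable_exp.comp ((hSmeas n).const_mul t))
        (K := Real.exp (|t| * B)) fun x => ?_
      rw [abs_of_pos (Real.exp_pos _), Real.exp_le_exp]
      calc t * S n x ≤ |t * S n x| := le_abs_self _
        _ = |t| * |S n x| := abs_mul _ _
        _ ≤ |t| * B := mul_le_mul_of_nonneg_left (hSbd n x) (abs_nonneg t)
    calc ∫ x, Real.exp (t * S n x) ∂μ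
        ≤ ∫ x, Real.exp (t ^ 2 * M ^ 2 / 2) * Real.exp (t * S n x - t ^ 2 / 2 * V n x) ∂μ :=
          integral_mono_ae hint1 ((hGint t n).const_mul _) hae
      _ = Real.exp (t ^ 2 * M ^ 2 / 2) * ∫ x, Real.exp (t * S n x - t ^ 2 / 2 * V n x) ∂μ :=
          MeasureTheory.integral_const_mul _ _
      _ ≤ Real.exp (t ^ 2 * M ^ 2 / 2) * 1 :=
          mul_le_mul_of_nonneg_left (azuma t n) (Real.exp_pos _).le
      _ = Real.exp (t ^ 2 * M ^ 2 / 2) := mul_one _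
  -- Gaussian mixture argument
  set T : ℝ := Real.sqrt (2 * lam) / M with hTdef
  have hpt : ∀ x, Real.exp (lam * (∑ k : Fin n, d k x) ^ 2 / M ^ 2)
      = (Real.sqrt (2 * π))⁻¹ * ∫ y : ℝ, Real.exp (T * S n x * y - y ^ 2 / 2) := by
    intro x
    have e1 : lam * (∑ k : Fin n, d k x) ^ 2 / M ^ 2 = lam * (S n x / M) ^ 2 := by
      rw [← hSn x, div_pow]
      ring
    rw [e1]
    exact aux_exp_sq_eq h0.le (by rw [hTdef]; ring)
  set f : Ω × ℝ → ℝ := fun p => Real.exp (T * S n p.1 * p.2 - p.2 ^ 2 / 2) with hfdef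
  have hfmeas : Measurable f :=
    Real.measurable_exp.comp
      (((((hSmeas n).comp measurable_fst).const_mul T).mul measurable_snd).sub
        ((measurable_snd.pow_const 2).div_const 2))
  have hint_inner : ∀ x : Ω, Integrable (fun y => f (x, y)) volume := fun x =>
    aux_integrable_gauss_shift (T * S n x)
  have hfint : Integrable f (μ.prod volume) := by
    refine (integrable_prod_iff hfmeas.aestronglyMeasurable).2
      ⟨Eventually.of_forall hint_inner, ?_⟩
    have e : (fun x => ∫ y : ℝ, ‖f (x, y)‖)
        = fun x => Real.sqrt (2 * π) * Real.exp ((T * S n x) ^ 2 / 2) := by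
      funext x
      have : ∀ y : ℝ, ‖f (x, y)‖ = f (x, y) := fun y => by
        rw [Real.norm_eq_abs, abs_of_pos (Real.exp_pos _)]
      simp_rw [this]
      exact aux_integral_gauss_shift (T * S n x)
    rw [e]
    refine aux_bdd_integrable μ ?_
      (K := Real.sqrt (2 * π) * Real.exp ((|T| * B) ^ 2 / 2)) fun x => ?_
    · exact (Real.measurable_exp.comp
        ((((hSmeas n).const_mul T).pow_const 2).div_const 2)).const_mul _
    · rw [abs_of_pos (by positivity)]
      refine mul_le_mul_of_nonneg_left ?_ (Real.sqrt_nonneg _)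
      rw [Real.exp_le_exp]
      have hsq : (T * S n x) ^ 2 ≤ (|T| * B) ^ 2 := by
        rw [mul_pow, mul_pow, sq_abs]
        refine mul_le_mul_of_nonneg_left ?_ (sq_nonneg T)
        exact sq_le_sq' (neg_le_of_abs_le (hSbd n x)) (le_of_abs_le (hSbd n x))
      linarith
  have hswap : ∫ x, (∫ y : ℝ, f (x, y)) ∂μ = ∫ y : ℝ, (∫ x, f (x, y) ∂μ) :=
    integral_integral_swap (f := fun x y => f (x, y)) hfint
  have hinner_int : Integrable (fun y : ℝ => ∫ x, f (x, y) ∂μ) volume :=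
    hfint.integral_prod_right
  have hinner_le : ∀ y : ℝ, (∫ x, f (x, y) ∂μ) ≤ Real.exp ((lam - 1 / 2) * y ^ 2) := by
    intro y
    have e : ∀ x, f (x, y) = Real.exp ((T * y) * S n x) * Real.exp (-(y ^ 2 / 2)) := by
      intro x
      simp only [hfdef]
      rw [← Real.exp_add]
      congr 1
      ring
    have hT2 : T ^ 2 = 2 * lam / M ^ 2 := by
      rw [hTdef, div_pow, Real.sq_sqrt (by linarith)]
    calc (∫ x, f (x, y) ∂μ)
        = (∫ x, Real.exp ((T * y) * S n x) ∂μ) * Real.exp (-(y ^ 2 / 2)) := by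
          simp_rw [e]
          rw [integral_mul_const]
      _ ≤ Real.exp ((T * y) ^ 2 * M ^ 2 / 2) * Real.exp (-(y ^ 2 / 2)) :=
          mul_le_mul_of_nonneg_right (mgf (T * y)) (Real.exp_pos _).le
      _ = Real.exp ((lam - 1 / 2) * y ^ 2) := by
          rw [← Real.exp_add]
          congr 1
          have e2 : (T * y) ^ 2 * M ^ 2 / 2 = lam * y ^ 2 := by
            rw [mul_pow, hT2]
            field_simp
          rw [e2]
          ring
  calc ∫ x, Real.exp (lam * (∑ k, d k x) ^ 2 / M ^ 2) ∂μ
      = (Real.sqrt (2 * π))⁻¹ * ∫ x, (∫ y : ℝ, f (x, y)) ∂μ := by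
        simp_rw [hpt]
        rw [MeasureTheory.integral_const_mul]
    _ = (Real.sqrt (2 * π))⁻¹ * ∫ y : ℝ, (∫ x, f (x, y) ∂μ) := by rw [hswap]
    _ ≤ (Real.sqrt (2 * π))⁻¹ * ∫ y : ℝ, Real.exp ((lam - 1 / 2) * y ^ 2) := by
        refine mul_le_mul_of_nonneg_left ?_ (by positivity)
        exact integral_mono hinner_int (aux_integrable_final h1) hinner_le
    _ = 1 / Real.sqrt (1 - 2 * lam) := aux_final h1
end

section
/- For normalized Rademacher sums S_n = (r_1 + ⋯ + r_n)/√n and 0 < λ < 1/2, sup_n E[exp(λ S_n²)] = 1/√(1 − 2λ), i.e. E[exp(λ S_n²)] ≤ 1/√(1−2λ) for all n and E[exp(λ S_n²)] → 1/√(1−2λ) as n → ∞. -/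
open MeasureTheory Real Filter

lemma aux_sinh_le {t : ℝ} (ht : 0 ≤ t) : Real.sinh t ≤ t * Real.cosh t := by
  have key : MonotoneOn (fun t : ℝ => t * Real.cosh t - Real.sinh t) (Set.Ici 0) := by
    apply monotoneOn_of_deriv_nonneg (convex_Ici 0)
    · fun_prop
    · intro x hx
      exact (((hasDerivAt_id x).mul (Real.hasDerivAt_cosh x)).sub
        (Real.hasDerivAt_sinh x)).differentiableAt.differentiableWithinAt
    · intro x hx
      rw [interior_Ici] at hx
      have hd : HasDerivAt (fun t : ℝ => t * Real.cosh t - Real.sinh t) (x * Real.sinh x) x := by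
        have : HasDerivAt (fun t : ℝ => t * Real.cosh t - Real.sinh t)
            (1 * Real.cosh x + x * Real.sinh x - Real.cosh x) x := ((hasDerivAt_id x).mul (Real.hasDerivAt_cosh x)).sub (Real.hasDerivAt_sinh x)
        convert this using 1
        simp
      rw [hd.deriv]
      exact mul_nonneg hx.le (Real.sinh_nonneg_iff.2 hx.le)
  have := key (Set.self_mem_Ici) (Set.mem_Ici.2 ht) ht
  simpa using this

lemma aux_log_cosh_le (t : ℝ) : Real.log (Real.cosh t) ≤ t ^ 2 / 2 := by
  wlog ht : 0 ≤ t with H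
  · have := H (-t) (by linarith [le_of_not_ge ht])
    simpa using this
  have key : MonotoneOn (fun t : ℝ => t ^ 2 / 2 - Real.log (Real.cosh t)) (Set.Ici 0) := by
    apply monotoneOn_of_deriv_nonneg (convex_Ici 0)
    · fun_prop (disch := intros; exact (Real.cosh_pos _).ne')
    · intro x hx
      exact ((((hasDerivAt_pow 2 x).div_const 2).sub
        ((Real.hasDerivAt_cosh x).log (Real.cosh_pos x).ne')).differentiableAt).differentiableWithinAt
    · intro x hx
      rw [interior_Ici] at hx
      have hd : HasDerivAt (fun t : ℝ => t ^ 2 / 2 - Real.log (Real.cosh t))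
          (x - Real.sinh x / Real.cosh x) x := by
        have : HasDerivAt (fun t : ℝ => t ^ 2 / 2 - Real.log (Real.cosh t))
            ((2:ℕ) * x ^ (2 - 1) / 2 - Real.sinh x / Real.cosh x) x := ((hasDerivAt_pow 2 x).div_const 2).sub
          ((Real.hasDerivAt_cosh x).log (Real.cosh_pos x).ne')
        convert this using 1
        simp
      rw [hd.deriv, sub_nonneg, div_le_iff₀ (Real.cosh_pos x)]
      exact aux_sinh_le hx.le
  have := key (Set.self_mem_Ici) (Set.mem_Ici.2 ht) ht
  simp only [ne_eq, OfNat.ofNat_ne_zero, not_false_eq_true, zero_pow, zero_div,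
    Real.cosh_zero, Real.log_one, sub_zero, sub_self] at this ⊢
  linarith [this]

lemma aux_cosh_le (t : ℝ) : Real.cosh t ≤ Real.exp (t ^ 2 / 2) := by
  rw [← Real.exp_log (Real.cosh_pos t)]
  exact Real.exp_le_exp.2 (aux_log_cosh_le t)


lemma aux_gauss_integrable (b : ℝ) :
    Integrable (fun x : ℝ => Real.exp (-(x ^ 2 / 2) + b * x)) := by
  have h : ∀ x : ℝ, Real.exp (-(x ^ 2 / 2) + b * x)
      = Real.exp (b ^ 2 / 2) * Real.exp (-(1 / 2 : ℝ) * (x - b) ^ 2) := by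
    intro x; rw [← Real.exp_add]; congr 1; ring
  have base : Integrable (fun x : ℝ => Real.exp (-(1 / 2 : ℝ) * x ^ 2)) :=
    integrable_exp_neg_mul_sq (by norm_num)
  exact ((base.comp_sub_right b).const_mul _).congr
    (Filter.Eventually.of_forall fun x => (h x).symm)

lemma aux_gauss_integral (b : ℝ) :
    ∫ x : ℝ, Real.exp (-(x ^ 2 / 2) + b * x)
      = Real.sqrt (2 * π) * Real.exp (b ^ 2 / 2) := by
  have h : ∀ x : ℝ, Real.exp (-(x ^ 2 / 2) + b * x)
      = Real.exp (b ^ 2 / 2) * Real.exp (-(1 / 2 : ℝ) * (x - b) ^ 2) := by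
    intro x; rw [← Real.exp_add]; congr 1; ring
  calc ∫ x : ℝ, Real.exp (-(x ^ 2 / 2) + b * x)
      = ∫ x : ℝ, Real.exp (b ^ 2 / 2) * Real.exp (-(1 / 2 : ℝ) * (x - b) ^ 2) := by
        congr 1; funext x; exact h x
    _ = Real.exp (b ^ 2 / 2) * ∫ x : ℝ, Real.exp (-(1 / 2 : ℝ) * (x - b) ^ 2) :=
        integral_const_mul _ _
    _ = Real.exp (b ^ 2 / 2) * ∫ x : ℝ, Real.exp (-(1 / 2 : ℝ) * x ^ 2) := by
        rw [integral_sub_right_eq_self (fun x : ℝ => Real.exp (-(1 / 2 : ℝ) * x ^ 2)) b]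
    _ = Real.exp (b ^ 2 / 2) * Real.sqrt (π / (1 / 2 : ℝ)) := by
        rw [integral_gaussian]
    _ = Real.sqrt (2 * π) * Real.exp (b ^ 2 / 2) := by
        rw [mul_comm]; congr 2; ring


lemma aux_sqrt_tendsto : Tendsto (fun n : ℕ => Real.sqrt n) atTop atTop := by
  apply Filter.tendsto_atTop_atTop.2
  intro b
  refine ⟨⌈b ^ 2⌉₊, fun n hn => ?_⟩
  rcases le_or_gt b 0 with hb | hb
  · exact hb.trans (Real.sqrt_nonneg _)
  · rw [show b = Real.sqrt (b ^ 2) by rw [Real.sqrt_sq hb.le]]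
    apply Real.sqrt_le_sqrt
    calc (b ^ 2 : ℝ) ≤ ⌈b ^ 2⌉₊ := Nat.le_ceil _
      _ ≤ n := by exact_mod_cast hn

lemma aux_cosh_pow_tendsto (a : ℝ) :
    Tendsto (fun n : ℕ => Real.cosh (a / Real.sqrt n) ^ n) atTop
      (nhds (Real.exp (a ^ 2 / 2))) := by
  rcases eq_or_ne a 0 with rfl | ha
  · simpa using tendsto_const_nhds (α := ℝ) (x := 1) (f := atTop (α := ℕ))
  -- sinh u / u → 1
  have hsinh : Tendsto (fun u : ℝ => Real.sinh u / u) (nhdsWithin 0 {(0:ℝ)}ᶜ) (nhds 1) := by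
    have h := (Real.hasDerivAt_sinh 0)
    rw [hasDerivAt_iff_tendsto_slope] at h
    simp only [slope_fun_def, Real.sinh_zero, Real.cosh_zero, sub_zero] at h
    refine h.congr fun u => ?_
    simp [smul_eq_mul, div_eq_inv_mul]
  -- log y / (y - 1) → 1 as y → 1
  have hlog : Tendsto (fun y : ℝ => Real.log y / (y - 1)) (nhdsWithin 1 {(1:ℝ)}ᶜ) (nhds 1) := by
    have h := Real.hasDerivAt_log (one_ne_zero (α := ℝ))
    rw [hasDerivAt_iff_tendsto_slope] at h
    simp only [slope_fun_def, Real.log_one, sub_zero, inv_one] at h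
    refine h.congr fun y => ?_
    simp [smul_eq_mul, div_eq_inv_mul]
  -- cosh maps punctured nbhd of 0 to punctured nbhd of 1
  have hcosh_map : Tendsto Real.cosh (nhdsWithin 0 {(0:ℝ)}ᶜ)
      (nhdsWithin 1 {(1:ℝ)}ᶜ) := by
    rw [tendsto_nhdsWithin_iff]
    constructor
    · have hca : Tendsto Real.cosh (nhds 0) (nhds (Real.cosh 0)) :=
        Real.continuous_cosh.continuousAt
      rw [Real.cosh_zero] at hca
      exact hca.mono_left nhdsWithin_le_nhds
    · filter_upwards [self_mem_nhdsWithin] with t ht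
      exact (Real.one_lt_cosh.2 ht).ne'
  have h1 : Tendsto (fun t : ℝ => Real.log (Real.cosh t) / (Real.cosh t - 1))
      (nhdsWithin 0 {(0:ℝ)}ᶜ) (nhds 1) := hlog.comp hcosh_map
  -- (cosh t - 1)/t² → 1/2
  have hhalf : Tendsto (fun t : ℝ => t / 2) (nhdsWithin 0 {(0:ℝ)}ᶜ)
      (nhdsWithin 0 {(0:ℝ)}ᶜ) := by
    rw [tendsto_nhdsWithin_iff]
    constructor
    · have : Tendsto (fun t : ℝ => t / 2) (nhds 0) (nhds (0 / 2)) :=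
        (continuous_id.div_const 2).continuousAt
      simpa using this.mono_left nhdsWithin_le_nhds
    · filter_upwards [self_mem_nhdsWithin] with t ht
      exact div_ne_zero ht two_ne_zero
  have h2 : Tendsto (fun t : ℝ => (Real.cosh t - 1) / t ^ 2)
      (nhdsWithin 0 {(0:ℝ)}ᶜ) (nhds (1 / 2)) := by
    have base : Tendsto (fun t : ℝ => (Real.sinh (t / 2) / (t / 2)) ^ 2 / 2)
        (nhdsWithin 0 {(0:ℝ)}ᶜ) (nhds (1 / 2)) := by
      have := ((hsinh.comp hhalf).pow 2).div_const 2
      simpa using this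
    apply base.congr'
    filter_upwards [self_mem_nhdsWithin] with t ht
    have hc : Real.cosh t - 1 = 2 * Real.sinh (t / 2) ^ 2 := by
      have h2t : Real.cosh (2 * (t / 2)) = Real.cosh (t / 2) ^ 2 + Real.sinh (t / 2) ^ 2 :=
        Real.cosh_two_mul _
      have hsq : Real.cosh (t / 2) ^ 2 = Real.sinh (t / 2) ^ 2 + 1 := Real.cosh_sq _
      have : Real.cosh t = Real.cosh (t / 2) ^ 2 + Real.sinh (t / 2) ^ 2 := by
        rw [← h2t, show 2 * (t / 2) = t by ring]
      rw [this, hsq]; ring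
    rw [hc]
    have ht2 : (t : ℝ) ^ 2 ≠ 0 := pow_ne_zero _ ht
    field_simp
  -- combine: log cosh t / t² → 1/2
  have h3 : Tendsto (fun t : ℝ => Real.log (Real.cosh t) / t ^ 2)
      (nhdsWithin 0 {(0:ℝ)}ᶜ) (nhds (1 / 2)) := by
    have := h1.mul h2
    rw [one_mul] at this
    apply this.congr'
    filter_upwards [self_mem_nhdsWithin] with t ht
    have hco : Real.cosh t - 1 ≠ 0 := sub_ne_zero.2 (Real.one_lt_cosh.2 ht).ne'
    have ht2 : (t : ℝ) ^ 2 ≠ 0 := pow_ne_zero _ ht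
    field_simp
  -- sequence a/√n → 0 within ≠ 0
  have hseq : Tendsto (fun n : ℕ => a / Real.sqrt n) atTop (nhdsWithin 0 {(0:ℝ)}ᶜ) := by
    rw [tendsto_nhdsWithin_iff]
    constructor
    · exact Tendsto.div_atTop tendsto_const_nhds aux_sqrt_tendsto
    · filter_upwards [eventually_ge_atTop 1] with n hn
      have : (0:ℝ) < Real.sqrt n := Real.sqrt_pos.2 (by exact_mod_cast hn)
      exact div_ne_zero ha this.ne'
  have hmain : Tendsto (fun n : ℕ => (n : ℝ) * Real.log (Real.cosh (a / Real.sqrt n)))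
      atTop (nhds (a ^ 2 / 2)) := by
    have := (h3.comp hseq).const_mul (a ^ 2)
    have hval : a ^ 2 * (1 / 2) = a ^ 2 / 2 := by ring
    rw [hval] at this
    apply this.congr'
    filter_upwards [eventually_ge_atTop 1] with n hn
    have hn0 : (0:ℝ) < (n : ℝ) := by exact_mod_cast hn
    have hsq : (a / Real.sqrt n) ^ 2 = a ^ 2 / n := by
      rw [div_pow, Real.sq_sqrt (Nat.cast_nonneg n)]
    simp only [Function.comp_apply, hsq]
    have ha2 : a ^ 2 ≠ 0 := pow_ne_zero _ ha
    field_simp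
  have := (Real.continuous_exp.tendsto _).comp hmain
  apply this.congr'
  filter_upwards [] with n
  simp only [Function.comp_apply]
  rw [Real.exp_nat_mul, Real.exp_log (Real.cosh_pos _)]

/-- For normalized Rademacher sums `S_n = (r_1 + ⋯ + r_n)/√n` and `0 < λ < 1/2`,
`E[exp(λ S_n²)] ≤ 1/√(1-2λ)` for every `n ≥ 1`, and
`E[exp(λ S_n²)] → 1/√(1-2λ)` as `n → ∞`. -/
theorem stmt_17 (lam : ℝ) (h0 : 0 < lam) (h1 : lam < 1 / 2)
    (E : ℕ → ℝ)
    (hE : ∀ n : ℕ, E n =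
      (1 / 2 ^ n : ℝ) *
        ∑ ε : Fin n → Bool,
          Real.exp (lam * ((∑ j, (if ε j then (1 : ℝ) else -1)) / Real.sqrt n) ^ 2)) :
    (∀ n : ℕ, 1 ≤ n → E n ≤ 1 / Real.sqrt (1 - 2 * lam)) ∧
      Filter.Tendsto E Filter.atTop (nhds (1 / Real.sqrt (1 - 2 * lam))) := by
  set c : ℝ := Real.sqrt (2 * lam) with hc
  have hc2 : c ^ 2 = 2 * lam := Real.sq_sqrt (by linarith)
  have h2π : (0:ℝ) < 2 * π := by positivity
  have hsqrt2π : Real.sqrt (2 * π) ≠ 0 := Real.sqrt_ne_zero'.2 h2π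
  have hb : (0:ℝ) < 1 / 2 - lam := by linarith
  set g : ℝ → ℝ := fun x => Real.exp (-(x ^ 2 / 2) + lam * x ^ 2) with hgdef
  have hg_eq : ∀ x : ℝ, g x = Real.exp (-(1 / 2 - lam) * x ^ 2) := by
    intro x; simp only [hgdef]; congr 1; ring
  have hg_int : Integrable g :=
    (integrable_exp_neg_mul_sq hb).congr (Filter.Eventually.of_forall fun x => (hg_eq x).symm)
  have hg_val : ∫ x : ℝ, g x = Real.sqrt (π / (1 / 2 - lam)) := by
    calc ∫ x : ℝ, g x = ∫ x : ℝ, Real.exp (-(1 / 2 - lam) * x ^ 2) := by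
          congr 1; funext x; exact hg_eq x
      _ = _ := integral_gaussian _
  have hval : (Real.sqrt (2 * π))⁻¹ * Real.sqrt (π / (1 / 2 - lam))
      = 1 / Real.sqrt (1 - 2 * lam) := by
    have h12 : (0:ℝ) < 1 - 2 * lam := by linarith
    have hπd : π / (1 / 2 - lam) = 2 * π * (1 - 2 * lam)⁻¹ := by
      field_simp
    rw [hπd, Real.sqrt_mul h2π.le, Real.sqrt_inv, ← mul_assoc, inv_mul_cancel₀ hsqrt2π,
      one_mul, one_div]
  set F : ℕ → ℝ → ℝ := fun n x =>
    Real.exp (-(x ^ 2 / 2)) * Real.cosh (c * x / Real.sqrt n) ^ n with hFdef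
  have hF_cont : ∀ n, Continuous (F n) := fun n => by
    simp only [hFdef]; fun_prop
  have hF_nonneg : ∀ n x, 0 ≤ F n x := fun n x =>
    mul_nonneg (Real.exp_pos _).le (pow_nonneg (Real.cosh_pos _).le n)
  have hF_bound : ∀ n x, F n x ≤ g x := by
    intro n x
    rcases Nat.eq_zero_or_pos n with rfl | hn
    · simp only [hFdef, hgdef, pow_zero, mul_one]
      exact Real.exp_le_exp.2 (by nlinarith [sq_nonneg x])
    · have hn0 : ((n : ℝ)) ≠ 0 := by positivity
      have hu : (c * x / Real.sqrt n) ^ 2 = c ^ 2 * x ^ 2 / n := by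
        rw [div_pow, mul_pow, Real.sq_sqrt (Nat.cast_nonneg n)]
      have hcosh : Real.cosh (c * x / Real.sqrt n) ^ n ≤ Real.exp (lam * x ^ 2) := by
        calc Real.cosh (c * x / Real.sqrt n) ^ n
            ≤ Real.exp ((c * x / Real.sqrt n) ^ 2 / 2) ^ n :=
              pow_le_pow_left₀ (Real.cosh_pos _).le (aux_cosh_le _) n
          _ = Real.exp ((n : ℝ) * ((c * x / Real.sqrt n) ^ 2 / 2)) :=
              (Real.exp_nat_mul _ n).symm
          _ = Real.exp (lam * x ^ 2) := by
              congr 1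
              rw [hu, hc2]
              field_simp
      calc F n x ≤ Real.exp (-(x ^ 2 / 2)) * Real.exp (lam * x ^ 2) :=
            mul_le_mul_of_nonneg_left hcosh (Real.exp_pos _).le
        _ = g x := by rw [← Real.exp_add]
  have main_id : ∀ n : ℕ, E n = (Real.sqrt (2 * π))⁻¹ * ∫ x : ℝ, F n x := by
    intro n
    rw [hE n]
    have step1 : ∀ s : ℝ, Real.exp (lam * s ^ 2)
        = (Real.sqrt (2 * π))⁻¹ * ∫ x : ℝ, Real.exp (-(x ^ 2 / 2) + (c * s) * x) := by
      intro s
      rw [aux_gauss_integral (c * s), ← mul_assoc, inv_mul_cancel₀ hsqrt2π, one_mul]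
      congr 1
      rw [mul_pow, hc2]
      ring
    have step2 : (∑ ε : Fin n → Bool,
          Real.exp (lam * ((∑ j, (if ε j then (1:ℝ) else -1)) / Real.sqrt n) ^ 2))
        = (Real.sqrt (2 * π))⁻¹ * ∫ x : ℝ, ∑ ε : Fin n → Bool,
            Real.exp (-(x ^ 2 / 2)
              + (c * ((∑ j, (if ε j then (1:ℝ) else -1)) / Real.sqrt n)) * x) := by
      rw [integral_finset_sum _ (fun ε _ => aux_gauss_integrable _), Finset.mul_sum]
      exact Finset.sum_congr rfl fun ε _ => step1 _
    rw [step2]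
    have step3 : ∀ x : ℝ, (∑ ε : Fin n → Bool,
          Real.exp (-(x ^ 2 / 2)
            + (c * ((∑ j, (if ε j then (1:ℝ) else -1)) / Real.sqrt n)) * x))
        = 2 ^ n * F n x := by
      intro x
      have h1 : ∀ ε : Fin n → Bool,
          Real.exp (-(x ^ 2 / 2)
              + (c * ((∑ j, (if ε j then (1:ℝ) else -1)) / Real.sqrt n)) * x)
            = Real.exp (-(x ^ 2 / 2)) *
              ∏ j, Real.exp ((c * x / Real.sqrt n) * (if ε j then (1:ℝ) else -1)) := by
        intro ε
        rw [Real.exp_add, ← Real.exp_sum]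
        congr 1
        rw [← Finset.mul_sum]
        ring
      rw [Finset.sum_congr rfl fun ε _ => h1 ε, ← Finset.mul_sum]
      have hswap : (∑ ε : Fin n → Bool,
            ∏ j, Real.exp ((c * x / Real.sqrt n) * (if ε j then (1:ℝ) else -1)))
          = ∏ _j : Fin n, ∑ b : Bool,
              Real.exp ((c * x / Real.sqrt n) * (if b then (1:ℝ) else -1)) := by
        rw [← Fintype.piFinset_univ]
        exact Finset.sum_prod_piFinset (Finset.univ : Finset Bool)
          (fun (_ : Fin n) b => Real.exp (c * x / Real.sqrt n * (if b then (1:ℝ) else -1)))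
      rw [hswap]
      have hbool : (∑ b : Bool, Real.exp ((c * x / Real.sqrt n) * (if b then (1:ℝ) else -1)))
          = 2 * Real.cosh (c * x / Real.sqrt n) := by
        have e1 : (if (true : Bool) = true then (1:ℝ) else -1) = 1 := rfl
        have e2 : (if (false : Bool) = true then (1:ℝ) else -1) = -1 := rfl
        rw [Fintype.sum_bool, e1, e2, mul_one, mul_neg_one, Real.cosh_eq]
        ring
      rw [hbool, Finset.prod_const, Finset.card_univ, Fintype.card_fin, mul_pow]
      simp only [hFdef]
      ring
    have : (∫ x : ℝ, ∑ ε : Fin n → Bool,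
          Real.exp (-(x ^ 2 / 2)
            + (c * ((∑ j, (if ε j then (1:ℝ) else -1)) / Real.sqrt n)) * x))
        = ∫ x : ℝ, 2 ^ n * F n x := by
      congr 1; funext x; exact step3 x
    rw [this, integral_const_mul]
    have h2n : (2:ℝ) ^ n ≠ 0 := by positivity
    field_simp
  have hFint : ∀ n, Integrable (F n) := fun n =>
    hg_int.mono' (hF_cont n).aestronglyMeasurable
      (Filter.Eventually.of_forall fun x => by
        rw [Real.norm_eq_abs, abs_of_nonneg (hF_nonneg n x)]; exact hF_bound n x)
  constructor
  · intro n _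
    rw [main_id n, ← hval, ← hg_val]
    exact mul_le_mul_of_nonneg_left (integral_mono (hFint n) hg_int (hF_bound n))
      (inv_nonneg.2 (Real.sqrt_nonneg _))
  · have hlim : ∀ x : ℝ, Tendsto (fun n : ℕ => F n x) atTop (nhds (g x)) := by
      intro x
      have h := (aux_cosh_pow_tendsto (c * x)).const_mul (Real.exp (-(x ^ 2 / 2)))
      have hv : Real.exp (-(x ^ 2 / 2)) * Real.exp ((c * x) ^ 2 / 2) = g x := by
        rw [← Real.exp_add]
        simp only [hgdef]
        congr 1
        rw [mul_pow, hc2]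
        ring
      rw [hv] at h
      exact h
    have hDCT : Tendsto (fun n : ℕ => ∫ x : ℝ, F n x) atTop (nhds (∫ x : ℝ, g x)) := by
      refine tendsto_integral_of_dominated_convergence g
        (fun n => (hF_cont n).aestronglyMeasurable) hg_int
        (fun n => Filter.Eventually.of_forall fun x => ?_)
        (Filter.Eventually.of_forall fun x => hlim x)
      rw [Real.norm_eq_abs, abs_of_nonneg (hF_nonneg n x)]
      exact hF_bound n x
    have := hDCT.const_mul (Real.sqrt (2 * π))⁻¹
    rw [hg_val, hval] at this
    exact this.congr fun n => (main_id n).symm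
end

section
/- (Chang–Wilson–Wolff) Let f_0, f_1, …, f_n be a discrete martingale with respect to a filtration generated by countable partitions, with differences d_k = f_k − f_{k−1} bounded. Then for every λ > 0, P(f_n − f_0 > λ) ≤ exp(−λ²/(2‖𝔖(f)‖_∞²)). -/
open MeasureTheory

/-- Chang–Wilson–Wolff: for a discrete martingale `f_0, …, f_n` with bounded
differences `d_k = f_k - f_{k-1}` and square function a.e. bounded by `M`,
`P(f_n - f_0 > t) ≤ exp(-t²/(2M²))` for every `t > 0`. -/
theorem stmt_18
    {Ω : Type*} [MeasurableSpace Ω] (μ : Measure Ω) [IsProbabilityMeasure μ]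
    (n : ℕ) (hn : 0 < n) (t : ℝ) (ht : 0 < t)
    (part : ℕ → ℕ → Set Ω)
    (hpart_meas : ∀ k i, MeasurableSet (part k i))
    (hpart_disj : ∀ k, Pairwise fun i j => Disjoint (part k i) (part k j))
    (hpart_cover : ∀ k, (⋃ i, part k i) = Set.univ)
    (hpart_zero : part 0 0 = Set.univ)
    (hpart_refine : ∀ k i, ∃ j, part (k + 1) i ⊆ part k j)
    (d : Fin n → Ω → ℝ)
    (hd_meas : ∀ k, Measurable (d k))
    (hd_bdd : ∀ k, ∃ C : ℝ, ∀ x, |d k x| ≤ C)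
    (hd_adapted : ∀ (k : Fin n) (i : ℕ), ∀ x ∈ part (k.1 + 1) i, ∀ y ∈ part (k.1 + 1) i,
      d k x = d k y)
    (hd_mart : ∀ (k : Fin n) (i : ℕ), ∫ x in part k.1 i, d k x ∂μ = 0)
    (M : ℝ) (hM : 0 < M)
    (hSq : ∀ᵐ x ∂μ, ∀ i : ℕ → ℕ, (∀ k : Fin n, x ∈ part k.1 (i k.1)) →
      ∑ k : Fin n, (sSup ((fun y => |d k y|) '' part k.1 (i k.1))) ^ 2 ≤ M ^ 2) :
    μ {x | t < ∑ k, d k x} ≤ ENNReal.ofReal (Real.exp (-(t ^ 2) / (2 * M ^ 2))) := by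
  classical
  -- atom index function
  have hJex : ∀ k x, ∃ i, x ∈ part k i := by
    intro k x
    have hx : x ∈ ⋃ i, part k i := by rw [hpart_cover k]; trivial
    exact Set.mem_iUnion.mp hx
  choose J hJ using hJex
  have hJu : ∀ k i x, x ∈ part k i → J k x = i := by
    intro k i x hx
    by_contra h
    exact Set.disjoint_left.mp (hpart_disj k h) (hJ k x) hx
  have hJmeas : ∀ k, Measurable (J k) := by
    intro k
    apply measurable_to_countable'
    intro i
    have h : J k ⁻¹' {i} = part k i := by
      ext x
      simp only [Set.mem_preimage, Set.mem_singleton_iff]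
      exact ⟨fun h => h ▸ hJ k x, fun h => hJu k i x h⟩
    rw [h]; exact hpart_meas k i
  -- refinement
  have href : ∀ m k, k ≤ m → ∀ i, ∃ j, part m i ⊆ part k j := by
    intro m
    induction m with
    | zero =>
      intro k hk i
      have : k = 0 := Nat.le_zero.mp hk
      subst this; exact ⟨i, subset_rfl⟩
    | succ m ih =>
      intro k hk i
      rcases Nat.lt_or_ge k (m + 1) with h | h
      · obtain ⟨j, hj⟩ := hpart_refine m i
        obtain ⟨j', hj'⟩ := ih k (Nat.lt_succ_iff.mp h) j
        exact ⟨j', hj.trans hj'⟩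
      · have : k = m + 1 := le_antisymm hk h
        subst this; exact ⟨i, subset_rfl⟩
  have hsame : ∀ k m, k ≤ m → ∀ x y i, x ∈ part m i → y ∈ part m i → J k x = J k y := by
    intro k m hkm x y i hx hy
    obtain ⟨j, hj⟩ := href m k hkm i
    rw [hJu k j x (hj hx), hJu k j y (hj hy)]
  have hdconst : ∀ (k : Fin n) m, k.1 < m → ∀ x y i, x ∈ part m i → y ∈ part m i →
      d k x = d k y := by
    intro k m hkm x y i hx hy
    obtain ⟨j, hj⟩ := href m (k.1 + 1) hkm i
    exact hd_adapted k j x (hj hx) y (hj hy)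
  -- extended differences and conditional sups
  choose C hC using hd_bdd
  set e : ℕ → Ω → ℝ := fun k x => if h : k < n then d ⟨k, h⟩ x else 0 with he
  set C' : ℕ → ℝ := fun k => if h : k < n then |C ⟨k, h⟩| else 0 with hC'
  have hC'0 : ∀ k, 0 ≤ C' k := by
    intro k; simp only [hC']
    split_ifs
    · exact abs_nonneg _
    · exact le_refl 0
  have hC'e : ∀ k x, |e k x| ≤ C' k := by
    intro k x; simp only [he, hC']
    split_ifs with h
    · exact (hC ⟨k, h⟩ x).trans (le_abs_self _)
    · simp
  set D : ℕ → Ω → ℝ := fun k x => sSup ((fun y => |e k y|) '' part k (J k x)) with hD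
  have hbddim : ∀ k (s : Set Ω), BddAbove ((fun y => |e k y|) '' s) := by
    intro k s
    refine ⟨C' k, ?_⟩
    rintro _ ⟨y, _, rfl⟩
    exact hC'e k y
  have hDle : ∀ k x, |e k x| ≤ D k x := by
    intro k x
    exact le_csSup (hbddim _ _) ⟨x, hJ k x, rfl⟩
  have hD0 : ∀ k x, 0 ≤ D k x := fun k x => (abs_nonneg _).trans (hDle k x)
  have hDleC : ∀ k x, D k x ≤ C' k := by
    intro k x
    refine csSup_le ⟨|e k x|, ⟨x, hJ k x, rfl⟩⟩ ?_
    rintro _ ⟨y, _, rfl⟩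
    exact hC'e k y
  have hDconst : ∀ k m, k ≤ m → ∀ x y i, x ∈ part m i → y ∈ part m i → D k x = D k y := by
    intro k m hkm x y i hx hy
    simp only [hD]
    rw [hsame k m hkm x y i hx hy]
  -- measurability
  have hemeas : ∀ k, Measurable (e k) := by
    intro k
    simp only [he]
    split_ifs with h
    · exact hd_meas _
    · exact measurable_const
  have hDmeas : ∀ k, Measurable (D k) := by
    intro k
    have h : D k = (fun i => sSup ((fun y => |e k y|) '' part k i)) ∘ J k := by
      funext x; simp only [hD, Function.comp]
    rw [h]
    exact measurable_from_top.comp (hJmeas k)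
  -- the exponential parameter
  set L : ℝ := t / M ^ 2 with hL
  have hLpos : 0 < L := div_pos ht (by positivity)
  -- the supermartingale
  set V : ℕ → Ω → ℝ := fun m x =>
    Real.exp (L * ∑ k ∈ Finset.range m, e k x - L ^ 2 / 2 * ∑ k ∈ Finset.range m, (D k x) ^ 2)
    with hV
  have hbint : ∀ (f : Ω → ℝ) (c : ℝ), Measurable f → (∀ x, |f x| ≤ c) → Integrable f μ := by
    intro f c hf hb
    exact (integrable_const c).mono' hf.aestronglyMeasurable
      (Filter.Eventually.of_forall (by simpa [Real.norm_eq_abs] using hb))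
  have hVmeas : ∀ m, Measurable (V m) := by
    intro m
    simp only [hV]
    have h1 : Measurable fun x => ∑ k ∈ Finset.range m, e k x :=
      Finset.measurable_sum _ fun k _ => hemeas k
    have h2 : Measurable fun x => ∑ k ∈ Finset.range m, (D k x) ^ 2 :=
      Finset.measurable_sum _ fun k _ => (hDmeas k).pow_const 2
    exact ((h1.const_mul L).sub (h2.const_mul (L ^ 2 / 2))).exp
  have hVpos : ∀ m x, 0 < V m x := fun m x => Real.exp_pos _
  have hVbd : ∀ m x, |V m x| ≤ Real.exp (L * ∑ k ∈ Finset.range m, C' k) := by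
    intro m x
    rw [abs_of_pos (hVpos m x)]
    simp only [hV]
    apply Real.exp_le_exp.mpr
    have h1 : ∑ k ∈ Finset.range m, e k x ≤ ∑ k ∈ Finset.range m, C' k :=
      Finset.sum_le_sum fun k _ => (le_abs_self _).trans (hC'e k x)
    have h2 : 0 ≤ ∑ k ∈ Finset.range m, (D k x) ^ 2 :=
      Finset.sum_nonneg fun k _ => sq_nonneg _
    nlinarith [hLpos.le, sq_nonneg L]
  have hVint : ∀ m, Integrable (V m) μ := fun m => hbint _ _ (hVmeas m) (hVbd m)
  -- the key induction
  have key : ∀ m, m ≤ n → ∫ x, V m x ∂μ ≤ 1 := by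
    intro m
    induction m with
    | zero =>
      intro _
      simp only [hV, Finset.range_zero, Finset.sum_empty, mul_zero, sub_zero, Real.exp_zero]
      simp
    | succ m ih =>
      intro hm1
      have hm : m < n := Nat.lt_of_succ_le hm1
      have hkey : ∀ i, ∫ x in part m i, V (m + 1) x ∂μ ≤ ∫ x in part m i, V m x ∂μ := by
        intro i
        rcases Set.eq_empty_or_nonempty (part m i) with hA | ⟨x0, hx0⟩
        · rw [hA]; simp
        · have hAm : MeasurableSet (part m i) := hpart_meas m i
          have hiJ : J m x0 = i := hJu m i x0 hx0
          set c := D m x0 with hcdef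
          set v := V m x0 with hvdef
          have hvpos : 0 < v := hVpos m x0
          have hc0 : 0 ≤ c := hD0 m x0
          have heconst : ∀ k < m, ∀ x ∈ part m i, e k x = e k x0 := by
            intro k hk x hx
            simp only [he]
            split_ifs with h
            · exact hdconst ⟨k, h⟩ m hk x x0 i hx hx0
            · rfl
          have hDconstA : ∀ k ≤ m, ∀ x ∈ part m i, D k x = D k x0 :=
            fun k hk x hx => hDconst k m hk x x0 i hx hx0
          have hVmc : ∀ x ∈ part m i, V m x = v := by
            intro x hx
            simp only [hvdef, hV]
            rw [Finset.sum_congr rfl fun k hk => heconst k (Finset.mem_range.mp hk) x hx,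
              Finset.sum_congr rfl fun k hk =>
                (by rw [hDconstA k (Finset.mem_range.mp hk).le x hx] :
                  (D k x) ^ 2 = (D k x0) ^ 2)]
          have hdboundA : ∀ x ∈ part m i, |e m x| ≤ c := by
            intro x hx
            calc |e m x| ≤ D m x := hDle m x
            _ = c := hDconstA m le_rfl x hx
          have hVsplit : ∀ x ∈ part m i,
              V (m + 1) x = v * Real.exp (-(L ^ 2 / 2 * c ^ 2)) * Real.exp (L * e m x) := by
            intro x hx
            have hval := hVmc x hx
            simp only [hV] at hval ⊢
            rw [Finset.sum_range_succ, Finset.sum_range_succ, ← hval, hDconstA m le_rfl x hx,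
              ← Real.exp_add, ← Real.exp_add]
            congr 1
            ring
          -- integrability pieces on the atom
          have hint_e : IntegrableOn (fun x => Real.exp (L * e m x)) (part m i) μ := by
            apply Integrable.integrableOn
            apply hbint _ (Real.exp (L * C' m)) ((hemeas m).const_mul L).exp
            intro x
            rw [abs_of_pos (Real.exp_pos _)]
            exact Real.exp_le_exp.mpr
              (mul_le_mul_of_nonneg_left ((le_abs_self _).trans (hC'e m x)) hLpos.le)
          have hmart : ∫ x in part m i, e m x ∂μ = 0 := by
            have hem : (fun x => e m x) = fun x => d ⟨m, hm⟩ x := by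
              funext x; simp only [he]; rw [dif_pos hm]
            rw [hem]
            exact hd_mart ⟨m, hm⟩ i
          have hoef : ∫ x in part m i, Real.exp (L * e m x) ∂μ ≤
              (μ (part m i)).toReal * Real.exp (L ^ 2 / 2 * c ^ 2) := by
            rcases eq_or_lt_of_le hc0 with hcz | hcpos
            · have hone : ∀ x ∈ part m i, Real.exp (L * e m x) = 1 := by
                intro x hx
                have h0 : e m x = 0 := by
                  have := (hdboundA x hx).trans hcz.symm.le
                  exact abs_eq_zero.mp (le_antisymm this (abs_nonneg _))
                rw [h0, mul_zero, Real.exp_zero]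
              rw [setIntegral_congr_fun hAm hone, setIntegral_const, measureReal_def, smul_eq_mul, mul_one]
              have : (1 : ℝ) ≤ Real.exp (L ^ 2 / 2 * c ^ 2) := by
                rw [← Real.exp_zero]
                exact Real.exp_le_exp.mpr (by positivity)
              nlinarith [ENNReal.toReal_nonneg (a := μ (part m i))]
            · set s := Real.sinh (L * c) / c with hsdef
              have hpt : ∀ x ∈ part m i,
                  Real.exp (L * e m x) ≤ Real.cosh (L * c) + e m x * s := by
                intro x hx
                have hu := abs_le.mp (hdboundA x hx)
                have ha : 0 ≤ (c + e m x) / (2 * c) :=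
                  div_nonneg (by linarith [hu.1]) (by linarith)
                have hb : 0 ≤ (c - e m x) / (2 * c) :=
                  div_nonneg (by linarith [hu.2]) (by linarith)
                have hab : (c + e m x) / (2 * c) + (c - e m x) / (2 * c) = 1 := by
                  field_simp
                  ring
                have hkey2 := convexOn_exp.2 (Set.mem_univ (L * c)) (Set.mem_univ (-(L * c)))
                  ha hb hab
                rw [smul_eq_mul, smul_eq_mul, smul_eq_mul, smul_eq_mul] at hkey2
                have harg : (c + e m x) / (2 * c) * (L * c) +
                    (c - e m x) / (2 * c) * -(L * c) = L * e m x := by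
                  field_simp; ring
                rw [harg] at hkey2
                refine hkey2.trans (le_of_eq ?_)
                rw [hsdef, Real.cosh_eq, Real.sinh_eq]
                field_simp
                ring
              have hint2 : IntegrableOn (fun x => Real.cosh (L * c) + e m x * s) (part m i) μ := by
                apply Integrable.integrableOn
                apply hbint _ (|Real.cosh (L * c)| + C' m * |s|)
                  (measurable_const.add ((hemeas m).mul_const s))
                intro x
                calc |Real.cosh (L * c) + e m x * s| ≤ |Real.cosh (L * c)| + |e m x * s| :=
                      abs_add_le _ _
                _ ≤ |Real.cosh (L * c)| + C' m * |s| := by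
                      rw [abs_mul]
                      have := hC'e m x
                      nlinarith [abs_nonneg s, abs_nonneg (e m x)]
              calc ∫ x in part m i, Real.exp (L * e m x) ∂μ
                  ≤ ∫ x in part m i, (Real.cosh (L * c) + e m x * s) ∂μ :=
                    setIntegral_mono_on hint_e hint2 hAm hpt
                _ = (μ (part m i)).toReal * Real.cosh (L * c) := by
                    rw [integral_add ((integrable_const _).integrableOn)
                      (((hbint _ (C' m * |s|) ((hemeas m).mul_const s) (fun x => by
                        rw [abs_mul]
                        have := hC'e m x
                        nlinarith [abs_nonneg s, abs_nonneg (e m x)])).integrableOn)),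
                      setIntegral_const, measureReal_def, integral_mul_const, hmart, zero_mul, add_zero,
                      smul_eq_mul]
                _ ≤ (μ (part m i)).toReal * Real.exp (L ^ 2 / 2 * c ^ 2) := by
                    apply mul_le_mul_of_nonneg_left _ ENNReal.toReal_nonneg
                    refine (Real.cosh_le_exp_half_sq (L * c)).trans (le_of_eq ?_)
                    congr 1
                    ring
          calc ∫ x in part m i, V (m + 1) x ∂μ
              = ∫ x in part m i,
                  (v * Real.exp (-(L ^ 2 / 2 * c ^ 2)) * Real.exp (L * e m x)) ∂μ :=
                setIntegral_congr_fun hAm hVsplit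
            _ = v * Real.exp (-(L ^ 2 / 2 * c ^ 2)) *
                  ∫ x in part m i, Real.exp (L * e m x) ∂μ := integral_const_mul _ _
            _ ≤ v * Real.exp (-(L ^ 2 / 2 * c ^ 2)) *
                  ((μ (part m i)).toReal * Real.exp (L ^ 2 / 2 * c ^ 2)) := by
                apply mul_le_mul_of_nonneg_left hoef (by positivity)
            _ = v * (μ (part m i)).toReal := by
                rw [show v * Real.exp (-(L ^ 2 / 2 * c ^ 2)) *
                    ((μ (part m i)).toReal * Real.exp (L ^ 2 / 2 * c ^ 2)) =
                    v * (μ (part m i)).toReal *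
                    (Real.exp (-(L ^ 2 / 2 * c ^ 2)) * Real.exp (L ^ 2 / 2 * c ^ 2)) from by
                  ring, ← Real.exp_add, neg_add_cancel, Real.exp_zero, mul_one]
            _ = ∫ x in part m i, V m x ∂μ := by
                rw [setIntegral_congr_fun hAm (fun x hx => hVmc x hx), setIntegral_const, measureReal_def,
                  smul_eq_mul, mul_comm]
      have h1 : HasSum (fun i => ∫ x in part m i, V (m + 1) x ∂μ) (∫ x, V (m + 1) x ∂μ) := by
        have h := hasSum_integral_iUnion (hpart_meas m) (hpart_disj m)
          ((hVint (m + 1)).integrableOn)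
        rwa [hpart_cover m, Measure.restrict_univ] at h
      have h2 : HasSum (fun i => ∫ x in part m i, V m x ∂μ) (∫ x, V m x ∂μ) := by
        have h := hasSum_integral_iUnion (hpart_meas m) (hpart_disj m)
          ((hVint m).integrableOn)
        rwa [hpart_cover m, Measure.restrict_univ] at h
      exact (hasSum_le hkey h1 h2).trans (ih hm.le)
  have hfin := key n le_rfl
  -- pass from e-sums to d-sums
  have hSe : ∀ x, ∑ k ∈ Finset.range n, e k x = ∑ k, d k x := by
    intro x
    rw [← Fin.sum_univ_eq_sum_range (fun k => e k x) n]
    apply Finset.sum_congr rfl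
    intro k _
    simp only [he]
    rw [dif_pos k.isLt]
  have hDsum : ∀ᵐ x ∂μ, ∑ k ∈ Finset.range n, (D k x) ^ 2 ≤ M ^ 2 := by
    filter_upwards [hSq] with x hx
    have h := hx (fun k => J k x) (fun k => hJ k.1 x)
    calc ∑ k ∈ Finset.range n, (D k x) ^ 2
        = ∑ k : Fin n, (D k.1 x) ^ 2 := (Fin.sum_univ_eq_sum_range (fun k => (D k x) ^ 2) n).symm
      _ = ∑ k : Fin n, (sSup ((fun y => |d k y|) '' part k.1 (J k.1 x))) ^ 2 := by
          apply Finset.sum_congr rfl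
          intro k _
          have hfe : (fun y => |e k.1 y|) = fun y => |d k y| := by
            funext y
            simp only [he]
            rw [dif_pos k.isLt]
          simp only [hD, hfe]
      _ ≤ M ^ 2 := h
  -- Chernoff
  have hEm : MeasurableSet {x | t < ∑ k, d k x} :=
    measurableSet_lt measurable_const (Finset.measurable_sum _ fun k _ => hd_meas k)
  have hind : ∀ᵐ x ∂μ,
      Set.indicator {x | t < ∑ k, d k x}
        (fun _ => Real.exp (L * t - L ^ 2 / 2 * M ^ 2)) x ≤ V n x := by
    filter_upwards [hDsum] with x hx
    by_cases hxE : x ∈ {x | t < ∑ k, d k x}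
    · rw [Set.indicator_of_mem hxE]
      simp only [hV]
      apply Real.exp_le_exp.mpr
      rw [hSe x]
      have h1 : L * t ≤ L * ∑ k, d k x :=
        mul_le_mul_of_nonneg_left (le_of_lt hxE) hLpos.le
      have h2 : L ^ 2 / 2 * ∑ k ∈ Finset.range n, (D k x) ^ 2 ≤ L ^ 2 / 2 * M ^ 2 :=
        mul_le_mul_of_nonneg_left hx (by positivity)
      linarith
    · rw [Set.indicator_of_notMem hxE]
      exact (hVpos n x).le
  have hint_ind : Integrable
      (Set.indicator {x | t < ∑ k, d k x} fun _ => Real.exp (L * t - L ^ 2 / 2 * M ^ 2)) μ :=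
    (integrable_const _).indicator hEm
  have hmono := integral_mono_ae hint_ind (hVint n) hind
  rw [integral_indicator_const _ hEm, smul_eq_mul] at hmono
  have hle1 : (μ {x | t < ∑ k, d k x}).toReal * Real.exp (L * t - L ^ 2 / 2 * M ^ 2) ≤ 1 :=
    hmono.trans hfin
  have hexp : L * t - L ^ 2 / 2 * M ^ 2 = t ^ 2 / (2 * M ^ 2) := by
    rw [hL]
    field_simp
    ring
  have hμle : (μ {x | t < ∑ k, d k x}).toReal ≤ Real.exp (-(t ^ 2) / (2 * M ^ 2)) := by
    rw [hexp] at hle1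
    have hepos : 0 < Real.exp (t ^ 2 / (2 * M ^ 2)) := Real.exp_pos _
    have h3 : (μ {x | t < ∑ k, d k x}).toReal ≤ 1 / Real.exp (t ^ 2 / (2 * M ^ 2)) :=
      (le_div_iff₀ hepos).mpr hle1
    calc (μ {x | t < ∑ k, d k x}).toReal ≤ 1 / Real.exp (t ^ 2 / (2 * M ^ 2)) := h3
      _ = Real.exp (-(t ^ 2) / (2 * M ^ 2)) := by
          rw [one_div, ← Real.exp_neg, neg_div]
  calc μ {x | t < ∑ k, d k x}
      = ENNReal.ofReal (μ {x | t < ∑ k, d k x}).toReal :=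
        (ENNReal.ofReal_toReal (measure_ne_top μ _)).symm
    _ ≤ ENNReal.ofReal (Real.exp (-(t ^ 2) / (2 * M ^ 2))) := ENNReal.ofReal_le_ofReal hμle
end
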